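/- arXiv:2201.11734 — 6 statements merged into one kernel-verified Lean document; each statement's English description precedes it below -/
import Mathlib

section
/- The number of partitions of m into at most k parts, denoted P(m,k), satisfies (1/k!)·C(m+k-1, k-1) ≤ P(m,k) ≤ (1/k!)·C(m + C(k+1,2) - 1, k-1). -/
open Finset

private lemma comp_finite (k N : ℕ) : Finite {l : Fin k → ℕ // ∑ i, l i = N} :=
  Finite.of_equiv _ (Sym.equivNatSumOfFintype (Fin k) N)

private lemma comp_card (k N : ℕ) (hk : 0 < k) :
    Nat.card {l : Fin k → ℕ // ∑ i, l i = N} = (N + k - 1).choose (k - 1) := by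
  rw [← Nat.card_congr (Sym.equivNatSumOfFintype (Fin k) N), Nat.card_eq_fintype_card,
    Sym.card_sym_eq_choose, Fintype.card_fin]
  have h1 : k + N - 1 = N + k - 1 := by omega
  have h2 : N ≤ N + k - 1 := by omega
  rw [h1, ← Nat.choose_symm h2]
  congr 1
  omega

private lemma sum_fin_rev (k : ℕ) : ∑ i : Fin k, (k - 1 - (i : ℕ)) = k.choose 2 := by
  have h : ∑ i : Fin k, (k - 1 - (i : ℕ)) = ∑ i : Fin k, ((i : ℕ)) := by
    rw [← Equiv.sum_comp (Fin.revPerm (n := k)) (fun i : Fin k => (i : ℕ))]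
    apply Finset.sum_congr rfl
    intro i _
    simp [Fin.val_rev]
    omega
  rw [h, Fin.sum_univ_eq_sum_range (fun i => i), Finset.sum_range_id, Nat.choose_two_right]

/-- the number `P(m,k)` of partitions of `m` into at most `k` parts satisfies
`(1/k!)·C(m+k-1, k-1) ≤ P(m,k) ≤ (1/k!)·C(m + C(k+1,2) - 1, k-1)` (stated multiplied
through by `k!`). -/
theorem stmt_3 (m k : ℕ) (hm : 0 < m) (hk : 0 < k) :
    (m + k - 1).choose (k - 1)
        ≤ k.factorial * Nat.card {l : Fin k → ℕ // Antitone l ∧ ∑ i, l i = m} ∧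
    k.factorial * Nat.card {l : Fin k → ℕ // Antitone l ∧ ∑ i, l i = m}
        ≤ (m + (k + 1).choose 2 - 1).choose (k - 1) := by
  classical
  haveI hCm : Finite {l : Fin k → ℕ // ∑ i, l i = m} := comp_finite k m
  haveI hCN : Finite {l : Fin k → ℕ // ∑ i, l i = m + k.choose 2} :=
    comp_finite k (m + k.choose 2)
  haveI hT : Finite {l : Fin k → ℕ // Antitone l ∧ ∑ i, l i = m} :=
    Finite.of_injective
      (fun l => (⟨l.1, l.2.2⟩ : {l : Fin k → ℕ // ∑ i, l i = m}))
      (by intro a b hab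
          simp only [Subtype.mk.injEq] at hab
          exact Subtype.ext hab)
  have hPerm : Nat.card (Equiv.Perm (Fin k)) = k.factorial := by
    rw [Nat.card_eq_fintype_card, Fintype.card_perm, Fintype.card_fin]
  have hProd : Nat.card (Equiv.Perm (Fin k) × {l : Fin k → ℕ // Antitone l ∧ ∑ i, l i = m})
      = k.factorial * Nat.card {l : Fin k → ℕ // Antitone l ∧ ∑ i, l i = m} := by
    rw [Nat.card_prod, hPerm]
  constructor
  · -- lower bound: surjection (σ, l) ↦ l ∘ σ onto compositions of m
    have hsurj : Function.Surjective
        (fun p : Equiv.Perm (Fin k) × {l : Fin k → ℕ // Antitone l ∧ ∑ i, l i = m} =>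
          (⟨fun i => p.2.1 (p.1 i), by
            rw [Equiv.sum_comp p.1 p.2.1]; exact p.2.2.2⟩ :
            {l : Fin k → ℕ // ∑ i, l i = m})) := by
      rintro ⟨f, hf⟩
      set σ := Tuple.sort f with hσ
      have hmono : Monotone (f ∘ σ) := Tuple.monotone_sort f
      refine ⟨⟨σ⁻¹.trans Fin.revPerm, ⟨fun i => f (σ (Fin.rev i)), ?_, ?_⟩⟩, ?_⟩
      · intro i j hij
        exact hmono (Fin.rev_le_rev.mpr hij)
      · rw [← Equiv.sum_comp (Fin.revPerm.trans σ) f] at hf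
        exact hf
      · apply Subtype.ext
        funext x
        simp [Fin.rev_rev]
    calc (m + k - 1).choose (k - 1)
        = Nat.card {l : Fin k → ℕ // ∑ i, l i = m} := (comp_card k m hk).symm
      _ ≤ Nat.card (Equiv.Perm (Fin k) × {l : Fin k → ℕ // Antitone l ∧ ∑ i, l i = m}) :=
          Nat.card_le_card_of_surjective _ hsurj
      _ = _ := hProd
  · -- upper bound: injection (σ, l) ↦ (i ↦ l (σ i) + (k - 1 - σ i))
    have key : ∀ (l : Fin k → ℕ), (∑ i, l i = m) →
        ∑ i, (l i + (k - 1 - (i : ℕ))) = m + k.choose 2 := by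
      intro l hl
      rw [Finset.sum_add_distrib, hl, sum_fin_rev]
    have hinj : Function.Injective
        (fun p : Equiv.Perm (Fin k) × {l : Fin k → ℕ // Antitone l ∧ ∑ i, l i = m} =>
          (⟨fun i => p.2.1 (p.1 i) + (k - 1 - ((p.1 i : Fin k) : ℕ)), by
            rw [Equiv.sum_comp p.1 (fun i => p.2.1 i + (k - 1 - (i : ℕ)))]
            exact key p.2.1 p.2.2.2⟩ :
            {l : Fin k → ℕ // ∑ i, l i = m + k.choose 2})) := by
      rintro ⟨σ₁, l₁, hl₁a, hl₁s⟩ ⟨σ₂, l₂, hl₂a, hl₂s⟩ h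
      have h' : ∀ x : Fin k, l₁ (σ₁ x) + (k - 1 - ((σ₁ x : Fin k) : ℕ))
          = l₂ (σ₂ x) + (k - 1 - ((σ₂ x : Fin k) : ℕ)) := by
        intro x
        exact congrFun (congrArg Subtype.val h) x
      obtain ⟨μ₁, hμ₁⟩ : ∃ μ : Fin k → ℕ, μ = fun i => l₁ i + (k - 1 - (i : ℕ)) := ⟨_, rfl⟩
      obtain ⟨μ₂, hμ₂⟩ : ∃ μ : Fin k → ℕ, μ = fun i => l₂ i + (k - 1 - (i : ℕ)) := ⟨_, rfl⟩
      have hanti : ∀ (l : Fin k → ℕ), Antitone l →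
          StrictAnti (fun i : Fin k => l i + (k - 1 - (i : ℕ))) := by
        intro l hl i j hij
        have h1 : l j ≤ l i := hl hij.le
        have h2 : k - 1 - (j : ℕ) < k - 1 - (i : ℕ) := by
          have h3 := j.isLt
          have h4 := Fin.lt_iff_val_lt_val.mp hij
          clear hProd hPerm
          omega
        show l j + (k - 1 - (j : ℕ)) < l i + (k - 1 - (i : ℕ))
        clear hProd hPerm
        omega
      have hs₁ : StrictAnti μ₁ := by rw [hμ₁]; exact hanti l₁ hl₁a
      have hs₂ : StrictAnti μ₂ := by rw [hμ₂]; exact hanti l₂ hl₂a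
      have h'' : ∀ x : Fin k, μ₁ (σ₁ x) = μ₂ (σ₂ x) := by
        intro x
        simp only [hμ₁, hμ₂]
        exact h' x
      have hπeq : ∀ y : Fin k, μ₁ y = μ₂ (σ₂ (σ₁⁻¹ y)) := by
        intro y
        have := h'' (σ₁⁻¹ y)
        simpa using this
      obtain ⟨π, hπ⟩ : ∃ π : Equiv.Perm (Fin k), π = σ₁⁻¹.trans σ₂ := ⟨_, rfl⟩
      have hπmono : StrictMono (fun x => π x) := by
        intro a b hab
        have h1 : μ₂ (π b) < μ₂ (π a) := by
          have ha := hπeq a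
          have hb := hπeq b
          have hab2 : μ₁ b < μ₁ a := hs₁ hab
          rw [hπ]
          simp only [Equiv.trans_apply]
          clear hProd hPerm
          omega
        exact (StrictAnti.lt_iff_gt hs₂).mp h1
      have hπid : ∀ x, π x = x := by
        intro x
        have he : ({ toEquiv := π, map_rel_iff' := fun {a b} => hπmono.le_iff_le } :
            Fin k ≃o Fin k) = OrderIso.refl (Fin k) := Subsingleton.elim _ _
        exact congrFun (congrArg (fun f : Fin k ≃o Fin k => (f : Fin k → Fin k)) he) x
      have hσ : σ₁ = σ₂ := by
        apply Equiv.ext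
        intro y
        have h4 := hπid (σ₁ y)
        rw [hπ] at h4
        have h5 : σ₂ y = σ₁ y := by simpa using h4
        exact h5.symm
      have hμ : μ₁ = μ₂ := by
        funext y
        have h2 := hπeq y
        have h3 : σ₂ (σ₁⁻¹ y) = y := by
          have := hπid y
          rw [hπ] at this
          simpa using this
        rw [h3] at h2
        exact h2
      have hl : l₁ = l₂ := by
        funext y
        have := congrFun hμ y
        simp only [hμ₁, hμ₂] at this
        exact Nat.add_right_cancel this
      simp only [Prod.mk.injEq, Subtype.mk.injEq]
      exact ⟨hσ, hl⟩
    have hN : m + k.choose 2 + k - 1 = m + (k + 1).choose 2 - 1 := by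
      have : (k + 1).choose 2 = k.choose 1 + k.choose 2 := Nat.choose_succ_succ k 1
      simp [Nat.choose_one_right] at this
      clear hProd hPerm
      omega
    calc k.factorial * Nat.card {l : Fin k → ℕ // Antitone l ∧ ∑ i, l i = m}
        = Nat.card (Equiv.Perm (Fin k) × {l : Fin k → ℕ // Antitone l ∧ ∑ i, l i = m}) :=
          hProd.symm
      _ ≤ Nat.card {l : Fin k → ℕ // ∑ i, l i = m + k.choose 2} :=
          Nat.card_le_card_of_injective _ hinj
      _ = (m + k.choose 2 + k - 1).choose (k - 1) := comp_card k (m + k.choose 2) hk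
      _ = (m + (k + 1).choose 2 - 1).choose (k - 1) := by rw [hN]
end

section
/- The (n+1)×(n+1) matrix M with entries M_{ij} = 1/(k+i+j-2)! (for 1 ≤ i,j ≤ n+1) has determinant (-1)^{n(n+1)/2} · ∏_{i=0}^{n} i!/(k+n+i)!, and in particular M is invertible. -/
open Finset Polynomial

lemma swap_prod {n : ℕ} (f : Fin (n+1) → Fin (n+1) → ℚ) :
    ∏ i : Fin (n+1), ∏ j ∈ Ioi i, f i j = ∏ j : Fin (n+1), ∏ i ∈ Iio j, f i j :=
  Finset.prod_comm' (by intro x y; simp [mem_Ioi, mem_Iio, and_comm])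

lemma inner_prod {n : ℕ} (j : Fin (n+1)) :
    ∏ i ∈ Iio j, (((j:ℕ):ℚ) - ((i:ℕ):ℚ)) = ((j:ℕ).factorial : ℚ) := by
  have h1 : ∏ i ∈ Iio j, (((j:ℕ):ℚ) - ((i:ℕ):ℚ))
      = ((∏ i ∈ Iio j, ((j:ℕ) - (i:ℕ)) : ℕ) : ℚ) := by
    rw [Nat.cast_prod]
    exact Finset.prod_congr rfl fun i hi => by
      rw [Nat.cast_sub (le_of_lt (Fin.lt_def.mp (mem_Iio.mp hi)))]
  rw [h1]
  congr 1
  have h2 : ∏ i ∈ Iio j, ((j:ℕ) - (i:ℕ)) = ∏ m ∈ Finset.Iio (j:ℕ), ((j:ℕ) - m) := by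
    rw [← Fin.map_valEmbedding_Iio, Finset.prod_map]; rfl
  rw [h2, Nat.Iio_eq_range, ← Nat.descFactorial_eq_prod_range, Nat.descFactorial_self]

/-- det of integer-point Vandermonde is product of factorials. -/
lemma vdm_det (n : ℕ) :
    (Matrix.vandermonde (fun i : Fin (n+1) => ((i:ℕ):ℚ))).det
      = ∏ i : Fin (n+1), ((i:ℕ).factorial : ℚ) := by
  rw [Matrix.det_vandermonde, swap_prod]
  exact Finset.prod_congr rfl fun j _ => inner_prod j

lemma vdm_ne_zero (n : ℕ) :
    (Matrix.vandermonde (fun i : Fin (n+1) => ((i:ℕ):ℚ))).det ≠ 0 := by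
  rw [vdm_det]
  exact Finset.prod_ne_zero_iff.mpr fun i _ => Nat.cast_ne_zero.mpr (Nat.factorial_ne_zero _)

lemma sign_rev_q (n : ℕ) :
    ((Equiv.Perm.sign (Fin.revPerm : Equiv.Perm (Fin (n+1)))) : ℚ)
      = (-1) ^ (n * (n+1) / 2) := by
  have h := Matrix.det_permute (Fin.revPerm : Equiv.Perm (Fin (n+1)))
      (Matrix.vandermonde (fun i : Fin (n+1) => ((i:ℕ):ℚ)))
  have hsub : (Matrix.vandermonde (fun i : Fin (n+1) => ((i:ℕ):ℚ))).submatrix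
        (Fin.revPerm : Equiv.Perm (Fin (n+1))) id
      = Matrix.vandermonde (fun i : Fin (n+1) => (((i.rev :ℕ)):ℚ)) := by
    ext i j; simp [Matrix.vandermonde, Matrix.submatrix]
  rw [hsub] at h
  have hval : ∀ i : Fin (n+1), ((i.rev : ℕ) : ℚ) = (n : ℚ) - (i : ℕ) := by
    intro i
    have : (i.rev : ℕ) = n - (i : ℕ) := by rw [Fin.val_rev]; omega
    rw [this, Nat.cast_sub (by omega : (i:ℕ) ≤ n)]
  have hL : (Matrix.vandermonde (fun i : Fin (n+1) => (((i.rev :ℕ)):ℚ))).det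
      = (-1) ^ (n * (n+1) / 2) *
        (Matrix.vandermonde (fun i : Fin (n+1) => ((i:ℕ):ℚ))).det := by
    rw [Matrix.det_vandermonde, Matrix.det_vandermonde]
    simp only [hval]
    have : ∀ i : Fin (n+1), ∀ j ∈ Ioi i,
        ((n:ℚ) - ((j:ℕ):ℚ)) - ((n:ℚ) - ((i:ℕ):ℚ)) = -((↑(j:ℕ) : ℚ) - ↑(i:ℕ)) := by
      intro i j _; ring
    rw [Finset.prod_congr rfl fun i _ => Finset.prod_congr rfl (this i)]
    have hneg : ∀ i : Fin (n+1), ∏ j ∈ Ioi i, (-(((j:ℕ):ℚ) - ((i:ℕ):ℚ)))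
        = (-1) ^ (Ioi i).card * ∏ j ∈ Ioi i, (((j:ℕ):ℚ) - ((i:ℕ):ℚ)) := by
      intro i
      have he : ∀ j ∈ Ioi i, -(((j:ℕ):ℚ) - ((i:ℕ):ℚ))
          = (-1:ℚ) * (((j:ℕ):ℚ) - ((i:ℕ):ℚ)) := fun j _ => by ring
      rw [Finset.prod_congr rfl he, Finset.prod_mul_distrib, Finset.prod_const]
    rw [Finset.prod_congr rfl fun i (_ : i ∈ univ) => hneg i]
    rw [Finset.prod_mul_distrib, Finset.prod_pow_eq_pow_sum]
    congr 2
    have hc : ∀ i : Fin (n+1), (Ioi i).card = n - (i:ℕ) := by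
      intro i; rw [Fin.card_Ioi]; omega
    rw [Finset.sum_congr rfl fun i _ => hc i]
    rw [Fin.sum_univ_eq_sum_range (fun i => n - i) (n+1)]
    rw [← Finset.sum_range_reflect (fun i => n - i) (n+1)]
    have h3 : ∀ j ∈ Finset.range (n+1), n - (n + 1 - 1 - j) = j := by
      intro j hj; have := Finset.mem_range.mp hj; omega
    rw [Finset.sum_congr rfl h3, Finset.sum_range_id]
    simp [Nat.mul_comm]
  rw [hL] at h
  exact (mul_right_cancel₀ (vdm_ne_zero n) h.symm)

/-- the `(n+1)×(n+1)` matrix with entries `1/(k+i+j-2)!` (indices `1 ≤ i,j ≤ n+1`;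
here `i,j : Fin (n+1)` are the 0-based shifts) has determinant
`(-1)^(n(n+1)/2) · ∏_{i=0}^n i!/(k+n+i)!`, and in particular is invertible. -/
theorem stmt_6 (k n : ℕ) :
    (Matrix.det (fun i j : Fin (n + 1) =>
        (1 : ℚ) / ((k + (i : ℕ) + (j : ℕ)).factorial : ℚ))
      = (-1) ^ (n * (n + 1) / 2) *
          ∏ i : Fin (n + 1), ((i : ℕ).factorial : ℚ) / ((k + n + (i : ℕ)).factorial : ℚ)) ∧
    IsUnit (Matrix.det (fun i j : Fin (n + 1) =>
        (1 : ℚ) / ((k + (i : ℕ) + (j : ℕ)).factorial : ℚ))) := by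
  set A : Matrix (Fin (n+1)) (Fin (n+1)) ℚ :=
    fun i j : Fin (n + 1) => (1 : ℚ) / ((k + (i : ℕ) + (j : ℕ)).factorial : ℚ) with hA
  set p : Fin (n+1) → ℚ[X] :=
    fun j => ∏ s ∈ Finset.range (j:ℕ), (X + C (((k + n - s : ℕ)):ℚ)) with hp
  have hmonic : ∀ j, (p j).Monic :=
    fun j => monic_prod_of_monic _ _ fun s _ => monic_X_add_C _
  have hdeg : ∀ j, (p j).natDegree = (j:ℕ) := by
    intro j
    rw [hp, Polynomial.natDegree_prod_of_monic _ _ (fun s _ => monic_X_add_C _),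
      Finset.sum_congr rfl (fun s _ => natDegree_X_add_C _), Finset.sum_const,
      Finset.card_range, smul_eq_mul, mul_one]
  have heval : ∀ (i j : Fin (n+1)),
      (p j).eval ((i:ℕ):ℚ) = (((k + (i:ℕ) + n).descFactorial (j:ℕ) : ℕ) : ℚ) := by
    intro i j
    rw [hp, eval_prod, Nat.descFactorial_eq_prod_range, Nat.cast_prod]
    refine Finset.prod_congr rfl fun s hs => ?_
    have hs' : s ≤ n := by
      have := Finset.mem_range.mp hs; have := j.isLt; omega
    rw [eval_add, eval_X, eval_C, Nat.cast_sub (by omega : s ≤ k + (i:ℕ) + n),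
      Nat.cast_sub (by omega : s ≤ k + n)]
    push_cast; ring
  have hentry : ∀ (i j : Fin (n+1)),
      A i (Fin.revPerm j)
        = (1 / ((k + (i:ℕ) + n).factorial : ℚ)) * (p j).eval ((i:ℕ):ℚ) := by
    intro i j
    rw [heval]
    have hrev : ((Fin.revPerm j : Fin (n+1)) : ℕ) = n - (j:ℕ) := by
      simp only [Fin.revPerm_apply, Fin.val_rev]; omega
    have hfac : (k + (i:ℕ) + (n - (j:ℕ))).factorial
        * (k + (i:ℕ) + n).descFactorial (j:ℕ) = (k + (i:ℕ) + n).factorial := by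
      have hle : (j:ℕ) ≤ k + (i:ℕ) + n := by have := j.isLt; omega
      have : k + (i:ℕ) + (n - (j:ℕ)) = k + (i:ℕ) + n - (j:ℕ) := by
        have := j.isLt; omega
      rw [this]
      exact Nat.factorial_mul_descFactorial hle
    rw [hA]
    simp only [hrev]
    have h1 : ((k + (i:ℕ) + (n - (j:ℕ))).factorial : ℚ) ≠ 0 :=
      Nat.cast_ne_zero.mpr (Nat.factorial_ne_zero _)
    have h2 : ((k + (i:ℕ) + n).factorial : ℚ) ≠ 0 :=
      Nat.cast_ne_zero.mpr (Nat.factorial_ne_zero _)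
    field_simp
    exact_mod_cast hfac.symm
  have hsubm : A.submatrix id (Fin.revPerm : Equiv.Perm (Fin (n+1)))
      = Matrix.of (fun i j : Fin (n+1) => (1 / ((k + (i:ℕ) + n).factorial : ℚ))
          * (Matrix.of (fun i j : Fin (n+1) => (p j).eval ((i:ℕ):ℚ))) i j) := by
    ext i j
    simpa [Matrix.submatrix] using hentry i j
  have hperm := Matrix.det_permute' (Fin.revPerm : Equiv.Perm (Fin (n+1))) A
  rw [hsubm, Matrix.det_mul_column] at hperm
  have hvdm : (Matrix.of (fun i j : Fin (n+1) => (p j).eval ((i:ℕ):ℚ))).det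
      = ∏ i : Fin (n+1), ((i:ℕ).factorial : ℚ) := by
    rw [← Matrix.det_eval_matrixOfPolynomials_eq_det_vandermonde
      (fun i : Fin (n+1) => ((i:ℕ):ℚ)) p hdeg hmonic, vdm_det]
  rw [hvdm] at hperm
  -- hperm : sign * det A = (∏ 1/(k+i+n)!) * ∏ i!
  have hsign := sign_rev_q n
  have hsq : ((Equiv.Perm.sign (Fin.revPerm : Equiv.Perm (Fin (n+1)))) : ℚ)
      * ((Equiv.Perm.sign (Fin.revPerm : Equiv.Perm (Fin (n+1)))) : ℚ) = 1 := by
    rw [hsign, ← pow_add, ← two_mul, pow_mul]; norm_num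
  have hdet : A.det = (-1) ^ (n * (n + 1) / 2) *
      ∏ i : Fin (n + 1), ((i : ℕ).factorial : ℚ) / ((k + n + (i : ℕ)).factorial : ℚ) := by
    have : A.det = ((Equiv.Perm.sign (Fin.revPerm : Equiv.Perm (Fin (n+1)))) : ℚ)
        * ((∏ i : Fin (n+1), 1 / ((k + (i:ℕ) + n).factorial : ℚ))
          * ∏ i : Fin (n+1), ((i:ℕ).factorial : ℚ)) := by
      rw [hperm, ← mul_assoc, hsq, one_mul]
    rw [this, hsign, ← Finset.prod_mul_distrib]
    congr 1
    refine Finset.prod_congr rfl fun i _ => ?_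
    rw [show k + (i:ℕ) + n = k + n + (i:ℕ) by ring]
    rw [one_div, inv_mul_eq_div]
  refine ⟨hdet, ?_⟩
  rw [hdet, isUnit_iff_ne_zero]
  refine mul_ne_zero (pow_ne_zero _ (by norm_num)) ?_
  exact Finset.prod_ne_zero_iff.mpr fun i _ =>
    div_ne_zero (Nat.cast_ne_zero.mpr (Nat.factorial_ne_zero _))
      (Nat.cast_ne_zero.mpr (Nat.factorial_ne_zero _))
end

section
/- The n×n Cauchy-type matrix with entries 1/(k+i+j-1) for 1 ≤ i,j ≤ n has determinant ∏_{i=0}^{n-1} (i!)^2 (k+i)! / (k+n+i)!, and in particular is invertible. -/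
open Finset Matrix

private lemma facQ_ne (a : ℕ) : ((a.factorial : ℚ)) ≠ 0 := by
  exact_mod_cast a.factorial_ne_zero

private lemma prodq (a m : ℕ) :
    (∏ i : Fin m, ((a : ℚ) + i + 1)) = ((a + m).factorial : ℚ) / (a.factorial : ℚ) := by
  induction m with
  | zero => simp [div_self (facQ_ne a)]
  | succ m ih =>
    rw [Fin.prod_univ_castSucc]
    simp only [Fin.coe_castSucc]
    rw [ih]
    have : (a + (m + 1)).factorial = (a + m + 1) * (a + m).factorial := by
      rw [← Nat.factorial_succ]; ring_nf
    rw [this]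
    push_cast
    field_simp

private lemma shiftfac (a m : ℕ) :
    (∏ i : Fin m, (((a + i).factorial : ℚ))) * ((a + m).factorial : ℚ)
      = (a.factorial : ℚ) * ∏ i : Fin m, (((a + 1 + i).factorial : ℚ)) := by
  have h1 := Fin.prod_univ_castSucc (f := fun i : Fin (m + 1) => (((a + i).factorial : ℚ)))
  have h2 := Fin.prod_univ_succ (f := fun i : Fin (m + 1) => (((a + i).factorial : ℚ)))
  simp only [Fin.coe_castSucc, Fin.val_succ, Fin.val_zero, add_zero, Fin.val_last] at h1 h2
  rw [← h1, h2]
  congr 1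
  apply Finset.prod_congr rfl
  intro i _
  congr 2
  omega

private lemma prodq_inv (a m : ℕ) :
    (∏ i : Fin m, (1 : ℚ) / ((a : ℚ) + i + 1)) = (a.factorial : ℚ) / ((a + m).factorial : ℚ) := by
  simp only [one_div]
  rw [Finset.prod_inv_distrib, prodq, inv_div]

private lemma hilb (n : ℕ) : ∀ k : ℕ,
    Matrix.det (fun i j : Fin n => (1 : ℚ) / ((k : ℚ) + (i : ℕ) + (j : ℕ) + 1))
      = ∏ i : Fin n, ((i : ℕ).factorial : ℚ) ^ 2 * ((k + (i : ℕ)).factorial : ℚ) /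
          ((k + n + (i : ℕ)).factorial : ℚ) := by
  induction n with
  | zero => intro k; simp only [Finset.univ_eq_empty, Finset.prod_empty]; exact Matrix.det_fin_zero
  | succ m IH =>
    intro k
    have hne : ∀ a b c : ℕ, ((a : ℚ) + b + c + 1) ≠ 0 := by
      intro a b c; positivity
    have hne2 : ∀ a b : ℕ, ((a : ℚ) + b + 1) ≠ 0 := by
      intro a b; positivity
    set M : Matrix (Fin (m+1)) (Fin (m+1)) ℚ :=
      fun i j => 1 / ((k : ℚ) + (i : ℕ) + (j : ℕ) + 1) with hM
    set N1 : Matrix (Fin (m+1)) (Fin (m+1)) ℚ :=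
      fun i j => if j = 0 then 1 / ((k : ℚ) + (i : ℕ) + 1)
        else 1 / ((k : ℚ) + (i : ℕ) + (j : ℕ) + 1) - 1 / ((k : ℚ) + (i : ℕ) + 1) with hN1
    set N2 : Matrix (Fin (m+1)) (Fin (m+1)) ℚ :=
      fun i j => if j = 0 then 1 else 1 / ((k : ℚ) + (i : ℕ) + (j : ℕ) + 1) with hN2
    set N3 : Matrix (Fin (m+1)) (Fin (m+1)) ℚ :=
      fun i j => if i = 0 then (if j = 0 then (1 : ℚ) else 1 / ((k : ℚ) + (j : ℕ) + 1))
        else (if j = 0 then 0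
          else 1 / ((k : ℚ) + (i : ℕ) + (j : ℕ) + 1) - 1 / ((k : ℚ) + (j : ℕ) + 1)) with hN3
    set N4 : Matrix (Fin (m+1)) (Fin (m+1)) ℚ :=
      fun i j => if i = 0 then 1 else if j = 0 then 0
        else 1 / ((k : ℚ) + (i : ℕ) + (j : ℕ) + 1) with hN4
    set r : Fin (m+1) → ℚ := fun i => 1 / ((k : ℚ) + (i : ℕ) + 1) with hr
    set c : Fin (m+1) → ℚ := fun j => if j = 0 then 1 else -((j : ℕ) : ℚ) with hc
    set c' : Fin (m+1) → ℚ := fun j => if j = 0 then 1 else 1 / ((k : ℚ) + (j : ℕ) + 1) with hc'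
    -- Step 1: column operations
    have h1 : M.det = N1.det := by
      rw [← Matrix.det_transpose M, ← Matrix.det_transpose N1]
      apply Matrix.det_eq_of_forall_row_eq_smul_add_const
        (c := fun j : Fin (m+1) => if j = 0 then 0 else 1) (k := 0)
      · simp
      · intro j i
        by_cases hj : j = 0 <;>
          simp [hM, hN1, Matrix.transpose, Matrix.of_apply, hj] <;> ring
    -- Step 1 factorization
    have h2 : N1 = Matrix.diagonal r * N2 * Matrix.diagonal c := by
      ext i j
      rw [Matrix.mul_diagonal, Matrix.diagonal_mul]
      by_cases hj : j = 0
      · simp [hN1, hN2, hr, hc, hj]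
      · simp only [hN1, hN2, hr, hc, if_neg hj]
        have h1' := hne2 k i
        have h2' := hne k i j
        field_simp
        try ring
        try tauto
    have h2det : N1.det = (∏ i, r i) * N2.det * (∏ j, c j) := by
      rw [h2, Matrix.det_mul, Matrix.det_mul, Matrix.det_diagonal, Matrix.det_diagonal]
      try ring
    -- Step 2: row operations
    have h3 : N2.det = N3.det := by
      apply Matrix.det_eq_of_forall_row_eq_smul_add_const
        (c := fun i : Fin (m+1) => if i = 0 then 0 else 1) (k := 0)
      · simp
      · intro i j
        by_cases hi : i = 0 <;> by_cases hj : j = 0 <;>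
          simp [hN2, hN3, hi, hj] <;> ring
    -- Step 2 factorization
    have h4 : N3 = Matrix.diagonal c * N4 * Matrix.diagonal c' := by
      ext i j
      rw [Matrix.mul_diagonal, Matrix.diagonal_mul]
      by_cases hi : i = 0 <;> by_cases hj : j = 0
      · simp [hN3, hN4, hc, hc', hi, hj]
      · simp [hN3, hN4, hc, hc', hi, hj]
      · simp [hN3, hN4, hc, hc', hi, hj]
      · simp only [hN3, hN4, hc, hc', if_neg hi, if_neg hj]
        have h1' := hne2 k j
        have h2' := hne k i j
        field_simp
        try ring
        try tauto
    have h4det : N3.det = (∏ i, c i) * N4.det * (∏ j, c' j) := by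
      rw [h4, Matrix.det_mul, Matrix.det_mul, Matrix.det_diagonal, Matrix.det_diagonal]
      try ring
    -- Step 3: expand along column 0
    have h5 : N4.det = Matrix.det (fun i j : Fin m =>
        (1 : ℚ) / (((k + 2 : ℕ) : ℚ) + (i : ℕ) + (j : ℕ) + 1)) := by
      rw [Matrix.det_succ_column_zero]
      rw [Fin.sum_univ_succ]
      have hz : ∀ i : Fin m, N4 i.succ 0 = 0 := by
        intro i; simp [hN4, Fin.succ_ne_zero]
      simp only [hz, mul_zero, zero_mul, Finset.sum_const_zero, add_zero]
      have : N4 0 0 = 1 := by simp [hN4]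
      rw [this]
      simp only [Fin.val_zero, pow_zero, one_mul, mul_one, Fin.succAbove_zero]
      congr 1
      ext i j
      have hi : (i.succ : Fin (m+1)) ≠ 0 := Fin.succ_ne_zero i
      have hj : (j.succ : Fin (m+1)) ≠ 0 := Fin.succ_ne_zero j
      rw [Matrix.submatrix_apply]
      simp only [Matrix.submatrix_apply, hN4, if_neg hi, if_neg hj, Fin.val_succ]
      congr 1
      push_cast
      ring
    -- products of the diagonal factors
    have hpr : (∏ i, r i) = (k.factorial : ℚ) / ((k + (m+1)).factorial : ℚ) := by
      rw [hr, prodq_inv k (m+1)]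
    have hpc : (∏ j, c j) = (-1 : ℚ) ^ m * (m.factorial : ℚ) := by
      rw [hc, Fin.prod_univ_succ]
      simp only [eq_self_iff_true, if_true, one_mul, if_neg (Fin.succ_ne_zero _), Fin.val_succ]
      have : ∀ i : Fin m, -(((i : ℕ) + 1 : ℕ) : ℚ) = (-1) * (((0:ℕ) : ℚ) + (i : ℕ) + 1) := by
        intro i; push_cast; ring
      rw [Finset.prod_congr rfl (fun i _ => this i), Finset.prod_mul_distrib,
        Finset.prod_const, prodq 0 m]
      simp
    have hpc' : (∏ j, c' j) = ((k+1).factorial : ℚ) / ((k + 1 + m).factorial : ℚ) := by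
      rw [hc', Fin.prod_univ_succ]
      simp only [eq_self_iff_true, if_true, one_mul, if_neg (Fin.succ_ne_zero _), Fin.val_succ]
      rw [← prodq_inv (k+1) m]
      apply Finset.prod_congr rfl
      intro i _
      congr 1
      push_cast
      ring
    have hsigns : (∏ j, c j) * (∏ j, c j) = ((m.factorial : ℚ)) ^ 2 := by
      rw [hpc]
      have hs : ((-1 : ℚ) ^ m) * ((-1 : ℚ) ^ m) = 1 := by
        rw [← pow_add]; exact Even.neg_one_pow ⟨m, rfl⟩
      linear_combination ((m.factorial : ℚ)) ^ 2 * hs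
    have hprg : (∏ i, r i) = (k.factorial : ℚ) / ((k + 1 + m).factorial : ℚ) := by
      rw [hpr]
      have : k + (m + 1) = k + 1 + m := by omega
      rw [this]
    have hD : N4.det = ∏ i : Fin m, ((i : ℕ).factorial : ℚ) ^ 2 *
        ((k + 2 + (i : ℕ)).factorial : ℚ) / ((k + 2 + m + (i : ℕ)).factorial : ℚ) := by
      rw [h5, IH (k + 2)]
    have hsplit : ∀ (a b : ℕ) (n' : ℕ),
        (∏ i : Fin n', ((i : ℕ).factorial : ℚ) ^ 2 * ((a + (i : ℕ)).factorial : ℚ) /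
          ((b + (i : ℕ)).factorial : ℚ))
        = ((∏ i : Fin n', ((i : ℕ).factorial : ℚ) ^ 2) *
            (∏ i : Fin n', ((a + (i : ℕ)).factorial : ℚ))) /
          (∏ i : Fin n', ((b + (i : ℕ)).factorial : ℚ)) := by
      intro a b n'
      rw [Finset.prod_div_distrib, Finset.prod_mul_distrib]
    have hA : (∏ i : Fin (m+1), ((i : ℕ).factorial : ℚ) ^ 2)
        = (∏ i : Fin m, ((i : ℕ).factorial : ℚ) ^ 2) * ((m.factorial : ℚ)) ^ 2 := by
      rw [Fin.prod_univ_castSucc]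
      simp only [Fin.coe_castSucc, Fin.val_last]
    have hB : (∏ i : Fin (m+1), ((k + (i : ℕ)).factorial : ℚ)) * (((k + 1 + m).factorial : ℚ))
        = (k.factorial : ℚ) * ((k + 1).factorial : ℚ) *
          ∏ i : Fin m, ((k + 2 + (i : ℕ)).factorial : ℚ) := by
      rw [Fin.prod_univ_succ]
      simp only [Fin.val_zero, add_zero, Fin.val_succ]
      have e : (∏ i : Fin m, ((k + ((i : ℕ) + 1)).factorial : ℚ))
          = ∏ i : Fin m, ((k + 1 + (i : ℕ)).factorial : ℚ) := by
        apply Finset.prod_congr rfl; intro i _; congr 2 <;> omega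
      have e2 : (∏ i : Fin m, ((k + 1 + 1 + (i : ℕ)).factorial : ℚ))
          = ∏ i : Fin m, ((k + 2 + (i : ℕ)).factorial : ℚ) := by
        apply Finset.prod_congr rfl; intro i _; congr 2 <;> omega
      rw [e, mul_assoc, shiftfac (k+1) m, e2]
      ring
    have hC : (∏ i : Fin (m+1), ((k + (m+1) + (i : ℕ)).factorial : ℚ))
        = ((k + 1 + m).factorial : ℚ) * ∏ i : Fin m, ((k + 2 + m + (i : ℕ)).factorial : ℚ) := by
      rw [Fin.prod_univ_succ]
      simp only [Fin.val_zero, add_zero, Fin.val_succ]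
      congr 1
      · congr 2 <;> omega
      · apply Finset.prod_congr rfl; intro i _; congr 2 <;> omega
    have hC'ne : (∏ i : Fin m, ((k + 2 + m + (i : ℕ)).factorial : ℚ)) ≠ 0 :=
      Finset.prod_ne_zero_iff.mpr (fun i _ => facQ_ne _)
    have hBdiv : (∏ i : Fin (m+1), ((k + (i : ℕ)).factorial : ℚ))
        = (k.factorial : ℚ) * ((k + 1).factorial : ℚ) *
          (∏ i : Fin m, ((k + 2 + (i : ℕ)).factorial : ℚ)) / ((k + 1 + m).factorial : ℚ) := by
      rw [eq_div_iff (facQ_ne _)]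
      exact hB
    calc M.det = (∏ i, r i) * ((∏ i, c i) * N4.det * (∏ j, c' j)) * (∏ j, c j) := by
          rw [h1, h2det, h3, h4det]
      _ = ((∏ j, c j) * (∏ j, c j)) * (((∏ i, r i)) * (∏ j, c' j)) * N4.det := by ring
      _ = ∏ i : Fin (m+1), ((i : ℕ).factorial : ℚ) ^ 2 * ((k + (i : ℕ)).factorial : ℚ) /
            ((k + (m+1) + (i : ℕ)).factorial : ℚ) := by
          rw [hsigns, hprg, hpc', hD, hsplit (k+2) (k+2+m) m, hsplit k (k+(m+1)) (m+1),
            hA, hC, hBdiv]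
          field_simp

/-- the `n×n` Cauchy-type matrix with entries `1/(k+i+j-1)` (indices
`1 ≤ i,j ≤ n`; here `i,j : Fin n` are the 0-based shifts so the entry is `1/(k+i+j+1)`)
has determinant `∏_{i=0}^{n-1} (i!)²(k+i)!/(k+n+i)!`, and in particular is invertible. -/
theorem stmt_7 (k n : ℕ) (hn : 1 ≤ n) :
    (Matrix.det (fun i j : Fin n =>
        (1 : ℚ) / ((k : ℚ) + (i : ℕ) + (j : ℕ) + 1))
      = ∏ i : Fin n, ((i : ℕ).factorial : ℚ) ^ 2 * ((k + (i : ℕ)).factorial : ℚ) /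
          ((k + n + (i : ℕ)).factorial : ℚ)) ∧
    IsUnit (Matrix.det (fun i j : Fin n =>
        (1 : ℚ) / ((k : ℚ) + (i : ℕ) + (j : ℕ) + 1))) := by
  have h := hilb n k
  refine ⟨h, ?_⟩
  rw [h]
  apply isUnit_iff_ne_zero.mpr
  apply Finset.prod_ne_zero_iff.mpr
  intro i _
  apply div_ne_zero
  · exact mul_ne_zero (pow_ne_zero _ (facQ_ne _)) (facQ_ne _)
  · exact facQ_ne _
end

section
/- Let D be a nonzero linear differential operator on ℂ[x_1,...,x_k] with polynomial coefficients. Then the dimension of the space of polynomial solutions of Df = 0 of degree at most m is O(m^{k-1}) as m → ∞. -/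
open Filter Asymptotics

/-- The operator `∂^α = ∏ᵢ ∂ᵢ^(αᵢ)` on `ℂ[x₁,...,x_k]`. -/
noncomputable def pderivPow (k : ℕ) (α : Fin k →₀ ℕ) :
    Module.End ℂ (MvPolynomial (Fin k) ℂ) :=
  (List.ofFn fun i : Fin k =>
    ((MvPolynomial.pderiv i).toLinearMap : Module.End ℂ (MvPolynomial (Fin k) ℂ)) ^ (α i)).prod

/-- The linear differential operator with polynomial coefficients
`D = Σ_{(α,β) ∈ S} c_{αβ} x^β ∂^α` on `ℂ[x₁,...,x_k]`. -/
noncomputable def diffOp (k : ℕ) (S : Finset ((Fin k →₀ ℕ) × (Fin k →₀ ℕ)))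
    (c : ((Fin k →₀ ℕ) × (Fin k →₀ ℕ)) → ℂ) :
    Module.End ℂ (MvPolynomial (Fin k) ℂ) :=
  ∑ p ∈ S, c p •
    ((LinearMap.mulLeft ℂ (MvPolynomial.monomial p.2 (1 : ℂ))) ∘ₗ pderivPow k p.1)


open MvPolynomial Finsupp

variable {k : ℕ}

/-- Product of descending factorials, the coefficient appearing in `∂^α x^γ`. -/
noncomputable def descC (γ α : Fin k →₀ ℕ) : ℂ := ∏ i, ((γ i).descFactorial (α i) : ℂ)

lemma pderiv_pow_monomial (i : Fin k) (a : ℕ) (γ : Fin k →₀ ℕ) (co : ℂ) :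
    (((MvPolynomial.pderiv i).toLinearMap : Module.End ℂ (MvPolynomial (Fin k) ℂ)) ^ a)
      (monomial γ co) = monomial (γ - single i a) (co * ((γ i).descFactorial a : ℂ)) := by
  induction a generalizing γ co with
  | zero => simp
  | succ a ih =>
    rw [pow_succ', Module.End.mul_apply, ih,
      show ∀ (δ : Fin k →₀ ℕ) (d : ℂ), (MvPolynomial.pderiv (R:=ℂ) i).toLinearMap
          ((monomial δ) d) = pderiv i (monomial δ d) from fun _ _ => rfl,
      pderiv_monomial]
    have h1 : γ - single i a - single i 1 = γ - single i (a + 1) := by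
      ext j; simp only [tsub_apply, single_apply]
      by_cases h : i = j <;> simp [h] <;> omega
    have h2 : (γ - single i a) i = γ i - a := by
      rw [tsub_apply, single_apply, if_pos rfl]
    rw [h1, h2, Nat.descFactorial_succ]
    push_cast
    ring_nf

lemma list_single_sum_apply (α : Fin k →₀ ℕ) (L : List (Fin k)) (i : Fin k) (h : i ∉ L) :
    ((L.map fun j => single j (α j)).sum) i = 0 := by
  induction L with
  | nil => simp
  | cons a L ih =>
    simp only [List.map_cons, List.sum_cons, Finsupp.add_apply]
    rw [single_apply, if_neg (by simp at h; tauto), ih (by simp at h; tauto)]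

lemma prod_map_pderiv (α : Fin k →₀ ℕ) (L : List (Fin k)) (hL : L.Nodup)
    (γ : Fin k →₀ ℕ) (co : ℂ) :
    ((L.map fun i => ((MvPolynomial.pderiv i).toLinearMap :
        Module.End ℂ (MvPolynomial (Fin k) ℂ)) ^ (α i)).prod) (monomial γ co)
      = monomial (γ - (L.map fun i => single i (α i)).sum)
          (co * (L.map fun i => ((γ i).descFactorial (α i) : ℂ)).prod) := by
  induction L with
  | nil => simp
  | cons i L ih =>
    simp only [List.map_cons, List.prod_cons, Module.End.mul_apply]
    rw [ih (List.Nodup.of_cons hL), pderiv_pow_monomial, List.sum_cons]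
    have hnot : i ∉ L := (List.nodup_cons.mp hL).1
    have h2 : (γ - (L.map fun j => single j (α j)).sum) i = γ i := by
      rw [tsub_apply, list_single_sum_apply α L i hnot, Nat.sub_zero]
    rw [h2]
    congr 1
    · rw [tsub_tsub, add_comm]
    · ring

lemma pderivPow_monomial (α γ : Fin k →₀ ℕ) (co : ℂ) :
    pderivPow k α (monomial γ co) = monomial (γ - α) (co * descC γ α) := by
  rw [pderivPow, List.ofFn_eq_map,
    prod_map_pderiv α (List.finRange k) (List.nodup_finRange k) γ co,
    ← Fin.sum_univ_def, ← Fin.prod_univ_def]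
  have hsum : (∑ i : Fin k, single i (α i) : Fin k →₀ ℕ) = α := by
    ext j; rw [Finsupp.finset_sum_apply]; simp [single_apply, Finset.sum_ite_eq]
  rw [hsum]; rfl

lemma coeff_diffOp (S : Finset ((Fin k →₀ ℕ) × (Fin k →₀ ℕ)))
    (c : ((Fin k →₀ ℕ) × (Fin k →₀ ℕ)) → ℂ) (f : MvPolynomial (Fin k) ℂ) (μ : Fin k →₀ ℕ) :
    coeff μ (diffOp k S c f) = ∑ p ∈ S, ∑ γ ∈ f.support,
      (if p.2 + (γ - p.1) = μ then c p * coeff γ f * descC γ p.1 else 0) := by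
  rw [diffOp, LinearMap.sum_apply, coeff_sum]
  refine Finset.sum_congr rfl fun p _ => ?_
  rw [LinearMap.smul_apply, LinearMap.comp_apply]
  conv_lhs => rw [f.as_sum]
  rw [map_sum, LinearMap.mulLeft_apply, Finset.mul_sum, coeff_smul, coeff_sum]
  rw [Finset.smul_sum]
  refine Finset.sum_congr rfl fun γ _ => ?_
  rw [pderivPow_monomial, monomial_mul, coeff_monomial]
  simp only [one_mul, smul_eq_mul, mul_ite, mul_zero]
  congr 1
  ring

lemma finsupp_add_eq {u v a b : Fin k →₀ ℕ} (h : u + v = a + b) (h1 : u ≤ a) (h2 : v ≤ b) :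
    u = a ∧ v = b := by
  have h3 : ∀ j, u j + v j = a j + b j := fun j => by
    have := congrArg (fun w : Fin k →₀ ℕ => w j) h
    simpa using this
  have h1' := Finsupp.le_def.mp h1
  have h2' := Finsupp.le_def.mp h2
  constructor <;> ext j <;> [skip; skip] <;>
    · have := h3 j; have := h1' j; have := h2' j; omega

lemma prod_support_coeff {ι : Type*} (s : Finset ι) (F : ι → MvPolynomial (Fin k) ℂ)
    (a : ι → (Fin k →₀ ℕ))
    (h : ∀ i ∈ s, ∀ δ ∈ (F i).support, δ ≤ a i) :
    (∀ δ ∈ (∏ i ∈ s, F i).support, δ ≤ ∑ i ∈ s, a i)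
      ∧ coeff (∑ i ∈ s, a i) (∏ i ∈ s, F i) = ∏ i ∈ s, coeff (a i) (F i) := by
  induction s using Finset.cons_induction with
  | empty =>
    refine ⟨fun δ hδ => ?_, by simp⟩
    rw [Finset.prod_empty, MvPolynomial.mem_support_iff, coeff_one] at hδ
    rw [Finset.sum_empty]
    by_cases h0 : (0 : Fin k →₀ ℕ) = δ
    · exact le_of_eq h0.symm
    · simp [h0] at hδ
  | cons i s his ih =>
    have hi := h i (Finset.mem_cons_self i s)
    obtain ⟨ihs, ihc⟩ := ih (fun j hj => h j (Finset.mem_cons_of_mem hj))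
    rw [Finset.prod_cons, Finset.sum_cons]
    constructor
    · intro δ hδ
      rcases Finset.mem_add.mp (MvPolynomial.support_mul _ _ hδ) with ⟨u, hu, v, hv, rfl⟩
      exact add_le_add (hi u hu) (ihs v hv)
    · rw [coeff_mul, Finset.prod_cons, ← ihc]
      refine Finset.sum_eq_single (a i, ∑ j ∈ s, a j) ?_ ?_
      · rintro ⟨u, v⟩ hm hne
        rw [Finset.HasAntidiagonal.mem_antidiagonal] at hm
        by_cases hu : coeff u (F i) = 0
        · simp [hu]
        by_cases hv : coeff v (∏ j ∈ s, F j) = 0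
        · simp [hv]
        exfalso
        obtain ⟨e1, e2⟩ := finsupp_add_eq hm (hi u (MvPolynomial.mem_support_iff.mpr hu))
          (ihs v (MvPolynomial.mem_support_iff.mpr hv))
        exact hne (Prod.ext e1 e2)
      · intro hn
        simp [Finset.mem_antidiagonal] at hn

lemma support_X_sub_C (i : Fin k) (z : ℂ) :
    ∀ δ ∈ (X i - C z : MvPolynomial (Fin k) ℂ).support, δ ≤ Finsupp.single i 1 := by
  intro δ hδ
  rw [MvPolynomial.mem_support_iff, coeff_sub, coeff_X', coeff_C] at hδ
  by_cases h1 : Finsupp.single i 1 = δ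
  · exact le_of_eq h1.symm
  · by_cases h2 : (0 : Fin k →₀ ℕ) = δ
    · exact h2 ▸ (zero_le : (0 : Fin k →₀ ℕ) ≤ Finsupp.single i 1)
    · simp [h1, h2] at hδ

lemma coeff_X_sub_C (i : Fin k) (z : ℂ) :
    coeff (Finsupp.single i 1) (X i - C z : MvPolynomial (Fin k) ℂ) = 1 := by
  have hne : (Finsupp.single i 1 : Fin k →₀ ℕ) ≠ 0 := by
    simp [Finsupp.single_eq_zero]
  rw [coeff_sub, coeff_X', coeff_C, if_pos rfl, if_neg (fun h => hne h.symm)]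
  ring

noncomputable def Mpoly (α : Fin k →₀ ℕ) : MvPolynomial (Fin k) ℂ :=
  ∏ i, ∏ j ∈ Finset.range (α i), (X i - C (j : ℂ))

lemma sum_single_eq (α : Fin k →₀ ℕ) : (∑ i, Finsupp.single i (α i)) = α := by
  ext j; rw [Finsupp.finset_sum_apply]
  simp [Finsupp.single_apply, Finset.sum_ite_eq]

lemma Mpoly_inner (i : Fin k) (a : ℕ) :
    (∀ δ ∈ (∏ j ∈ Finset.range a, (X i - C (j : ℂ) : MvPolynomial (Fin k) ℂ)).support,
        δ ≤ Finsupp.single i a)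
      ∧ coeff (Finsupp.single i a)
          (∏ j ∈ Finset.range a, (X i - C (j : ℂ) : MvPolynomial (Fin k) ℂ)) = 1 := by
  have := prod_support_coeff (Finset.range a)
    (fun j => (X i - C (j : ℂ) : MvPolynomial (Fin k) ℂ))
    (fun _ => Finsupp.single i 1) (fun j _ => support_X_sub_C i (j : ℂ))
  have hs : (∑ _j ∈ Finset.range a, Finsupp.single i 1) = Finsupp.single i a := by
    rw [Finset.sum_const, Finset.card_range]
    ext j; simp [Finsupp.single_apply]
  rw [hs] at this
  exact ⟨this.1, by rw [this.2]; exact Finset.prod_eq_one fun j _ => coeff_X_sub_C i (j : ℂ)⟩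

lemma Mpoly_support (α : Fin k →₀ ℕ) : ∀ δ ∈ (Mpoly α).support, δ ≤ α := by
  have := prod_support_coeff Finset.univ
    (fun i => ∏ j ∈ Finset.range (α i), (X i - C (j : ℂ) : MvPolynomial (Fin k) ℂ))
    (fun i => Finsupp.single i (α i)) (fun i _ => (Mpoly_inner i (α i)).1)
  rw [sum_single_eq] at this
  exact this.1

lemma Mpoly_coeff (α : Fin k →₀ ℕ) : coeff α (Mpoly α) = 1 := by
  have := prod_support_coeff Finset.univ
    (fun i => ∏ j ∈ Finset.range (α i), (X i - C (j : ℂ) : MvPolynomial (Fin k) ℂ))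
    (fun i => Finsupp.single i (α i)) (fun i _ => (Mpoly_inner i (α i)).1)
  rw [sum_single_eq] at this
  rw [Mpoly, this.2]
  exact Finset.prod_eq_one fun i _ => (Mpoly_inner i (α i)).2

lemma cast_desc (n a : ℕ) :
    (∏ j ∈ Finset.range a, ((n : ℂ) - j)) = (n.descFactorial a : ℂ) := by
  induction a with
  | zero => simp
  | succ a ih =>
    rw [Finset.prod_range_succ, ih, Nat.descFactorial_succ]
    by_cases h : a < n
    · push_cast [Nat.cast_sub (le_of_lt h)]; ring
    · have hna : n - a = 0 := by omega
      rw [hna, zero_mul, Nat.cast_zero]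
      rcases Nat.lt_or_ge n a with h2 | h2
      · rw [Nat.descFactorial_eq_zero_iff_lt.mpr h2, Nat.cast_zero, zero_mul]
      · have ha : a = n := by omega
        subst ha; simp

lemma Mpoly_eval (α γ : Fin k →₀ ℕ) :
    eval (fun i => (γ i : ℂ)) (Mpoly α) = descC γ α := by
  rw [Mpoly, map_prod, descC]
  refine Finset.prod_congr rfl fun i _ => ?_
  rw [map_prod, ← cast_desc]
  exact Finset.prod_congr rfl fun j _ => by simp

lemma le_sum_eq {u v : Fin k →₀ ℕ} (h : u ≤ v) (hs : ∑ i, v i ≤ ∑ i, u i) : u = v := by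
  have h' := Finsupp.le_def.mp h
  by_contra hne
  have : ∃ j, u j < v j := by
    by_contra hall
    push_neg at hall
    exact hne (Finsupp.ext fun j => le_antisymm (h' j) (hall j))
  obtain ⟨j, hj⟩ := this
  have : ∑ i, u i < ∑ i, v i :=
    Finset.sum_lt_sum (fun i _ => h' i) ⟨j, Finset.mem_univ j, hj⟩
  omega

lemma sz : ∀ (k : ℕ) (Q : MvPolynomial (Fin k) ℂ), Q ≠ 0 → ∀ G : Finset ℂ,
    ((Fintype.piFinset fun _ : Fin k => G).filter fun x => eval x Q = 0).card * G.card
      ≤ Q.totalDegree * G.card ^ k := by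
  intro k
  induction k with
  | zero =>
    intro Q hQ G
    obtain ⟨a, rfl⟩ := MvPolynomial.C_surjective (Fin 0) Q
    have ha : a ≠ 0 := fun h => hQ (by rw [h, map_zero])
    have : ((Fintype.piFinset fun _ : Fin 0 => G).filter fun x => eval x (C a) = 0) = ∅ := by
      refine Finset.filter_false_of_mem fun x _ => ?_
      simpa using ha
    simp [this, ha]
  | succ k ih =>
    intro Q hQ G
    set P := finSuccEquiv ℂ k Q with hPdef
    have hP : P ≠ 0 := by
      intro h
      exact hQ ((map_eq_zero_iff _ (finSuccEquiv ℂ k).injective).mp h)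
    set j₀ := P.natDegree with hj₀
    set q := P.coeff j₀ with hq
    have hqne : q ≠ 0 := Polynomial.leadingCoeff_ne_zero.mpr hP
    have hdeg : q.totalDegree + j₀ ≤ Q.totalDegree :=
      MvPolynomial.totalDegree_coeff_finSuccEquiv_add_le Q j₀ hqne
    set grid1 := Fintype.piFinset fun _ : Fin (k+1) => G with hg1
    set grid := Fintype.piFinset fun _ : Fin k => G with hg
    set A := grid1.filter fun x => eval x Q = 0 with hA
    have hcard : A.card = ∑ s ∈ grid, ((A.filter fun x => Fin.tail x = s).card) := by
      refine Finset.card_eq_sum_card_fiberwise fun x hx => ?_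
      rw [hA, Finset.mem_coe, Finset.mem_filter] at hx
      rw [hg, Finset.mem_coe, Fintype.mem_piFinset]
      intro i
      exact (Fintype.mem_piFinset.mp hx.1) i.succ
    have hfiber : ∀ s ∈ grid, (A.filter fun x => Fin.tail x = s).card
        = (G.filter fun y => eval (Fin.cons y s) Q = 0).card := by
      intro s hs
      refine Finset.card_bij (fun x _ => x 0) ?_ ?_ ?_
      · rintro x hx
        rw [Finset.mem_filter] at hx
        obtain ⟨hx1, hx2⟩ := hx
        rw [hA, Finset.mem_filter] at hx1
        rw [Finset.mem_filter]
        refine ⟨Fintype.mem_piFinset.mp hx1.1 0, ?_⟩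
        rw [show Fin.cons (x 0) s = x by rw [← hx2, Fin.cons_self_tail]]
        exact hx1.2
      · intro x hx y hy hxy
        rw [Finset.mem_filter] at hx hy
        have hxy' : x 0 = y 0 := hxy
        rw [← Fin.cons_self_tail x, ← Fin.cons_self_tail y, hx.2, hy.2, hxy']
      · intro y hy
        rw [Finset.mem_filter] at hy
        refine ⟨Fin.cons y s, ?_, ?_⟩
        · rw [Finset.mem_filter, hA, Finset.mem_filter]
          refine ⟨⟨?_, hy.2⟩, ?_⟩
          · rw [Fintype.mem_piFinset]
            intro i
            induction i using Fin.cases with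
            | zero => rw [Fin.cons_zero]; exact hy.1
            | succ j => rw [Fin.cons_succ]; exact Fintype.mem_piFinset.mp (hg ▸ hs) j
          · simp
        · simp
    have hbound : ∀ s ∈ grid, (G.filter fun y => eval (Fin.cons y s) Q = 0).card
        ≤ if eval s q = 0 then G.card else j₀ := by
      intro s _
      by_cases hc : eval s q = 0
      · rw [if_pos hc]
        exact Finset.card_le_card (Finset.filter_subset _ _)
      · rw [if_neg hc]
        set ps := P.map (eval s) with hps
        have hpsne : ps ≠ 0 := by
          intro h
          apply hc
          rw [hq, ← Polynomial.coeff_map (eval s), ← hps, h, Polynomial.coeff_zero]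
        have hsub : (G.filter fun y => eval (Fin.cons y s) Q = 0) ⊆ ps.roots.toFinset := by
          intro y hy
          rw [Finset.mem_filter] at hy
          rw [Multiset.mem_toFinset, Polynomial.mem_roots hpsne]
          have := MvPolynomial.eval_eq_eval_mv_eval' s y Q
          rw [Polynomial.IsRoot, ← this]
          exact hy.2
        calc (G.filter fun y => eval (Fin.cons y s) Q = 0).card
            ≤ ps.roots.toFinset.card := Finset.card_le_card hsub
          _ ≤ Multiset.card ps.roots := ps.roots.toFinset_card_le
          _ ≤ ps.natDegree := ps.card_roots'
          _ ≤ j₀ := Polynomial.natDegree_map_le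
    set Zq := (grid.filter fun s => eval s q = 0).card with hZq
    have hgridcard : grid.card = G.card ^ k := by
      rw [hg, Fintype.card_piFinset]
      simp
    have hAle : A.card ≤ Zq * G.card + G.card ^ k * j₀ := by
      rw [hcard]
      calc ∑ s ∈ grid, (A.filter fun x => Fin.tail x = s).card
          ≤ ∑ s ∈ grid, (if eval s q = 0 then G.card else j₀) := by
            refine Finset.sum_le_sum fun s hs => ?_
            rw [hfiber s hs]
            exact hbound s hs
        _ = Zq * G.card + (grid.filter fun s => ¬ eval s q = 0).card * j₀ := by
            rw [Finset.sum_ite, Finset.sum_const, Finset.sum_const, smul_eq_mul, smul_eq_mul]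
        _ ≤ Zq * G.card + G.card ^ k * j₀ := by
            gcongr
            rw [← hgridcard]
            exact Finset.card_le_card (Finset.filter_subset _ _)
    have hIH := ih q hqne G
    calc A.card * G.card ≤ (Zq * G.card + G.card ^ k * j₀) * G.card := by gcongr
      _ = (Zq * G.card) * G.card + j₀ * G.card ^ (k+1) := by ring
      _ ≤ (q.totalDegree * G.card ^ k) * G.card + j₀ * G.card ^ (k+1) := by gcongr
      _ = (q.totalDegree + j₀) * G.card ^ (k+1) := by ring
      _ ≤ Q.totalDegree * G.card ^ (k+1) := by gcongr

lemma sep_lemma (B : ℕ) : ∀ (n : ℕ) (d : Fin n → ℤ), (∀ i, 2 * |d i| < B) →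
    (∑ i, d i * (B:ℤ)^(i:ℕ)) = 0 → ∀ i, d i = 0 := by
  intro n
  induction n with
  | zero => intro d _ _ i; exact absurd i.2 (by omega)
  | succ n ih =>
    intro d hd hsum
    rw [Fin.sum_univ_succ] at hsum
    have hrw : ∀ i : Fin n, d i.succ * (B:ℤ)^((i.succ : Fin (n+1)) : ℕ)
        = (d i.succ * (B:ℤ)^(i:ℕ)) * B := by
      intro i
      rw [show ((i.succ : Fin (n+1)) : ℕ) = (i : ℕ) + 1 from rfl, pow_succ]
      ring
    rw [Finset.sum_congr rfl (fun i _ => hrw i), ← Finset.sum_mul] at hsum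
    set Ssum := ∑ i : Fin n, d i.succ * (B:ℤ)^(i:ℕ) with hS
    have hd0 : d 0 = 0 ∧ Ssum = 0 := by
      have hB : 2 * |d 0| < B := hd 0
      by_cases hSz : Ssum = 0
      · constructor
        · simpa [hSz, Fin.val_zero, pow_zero] using hsum
        · exact hSz
      · exfalso
        have h1 : 1 ≤ |Ssum| := Int.one_le_abs (by omega)
        have h2 : |d 0 * (B:ℤ)^((0 : Fin (n+1)) : ℕ)| = |d 0| := by
          simp
        have h4 : d 0 * (B:ℤ)^((0 : Fin (n+1)) : ℕ) = - (Ssum * B) := by omega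
        have h3 : |d 0| = |Ssum| * B := by
          rw [← h2, h4, abs_neg, abs_mul]
          congr 1
          rw [abs_of_nonneg (by positivity)]
        nlinarith [abs_nonneg (d 0), abs_nonneg Ssum]
    intro i
    induction i using Fin.cases with
    | zero => exact hd0.1
    | succ j =>
      exact ih (fun i => d i.succ) (fun i => hd i.succ) hd0.2 j

open scoped Classical in
lemma kernel_sum_eq_zero
    (S : Finset ((Fin k →₀ ℕ) × (Fin k →₀ ℕ))) (c : ((Fin k →₀ ℕ) × (Fin k →₀ ℕ)) → ℂ)
    (B : ℕ)
    (p₀ : (Fin k →₀ ℕ) × (Fin k →₀ ℕ)) (hp₀ : p₀ ∈ S) (hc₀ : c p₀ ≠ 0)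
    (hsep : ∀ p ∈ S, c p ≠ 0 →
        (∑ i, ((p.2 i : ℤ) - p.1 i) * (B:ℤ)^(i:ℕ)) = (∑ i, ((p₀.2 i : ℤ) - p₀.1 i) * (B:ℤ)^(i:ℕ))
        → ∀ i, (p.2 i : ℤ) - p.1 i = (p₀.2 i : ℤ) - p₀.1 i)
    (hmax : ∀ p ∈ S, c p ≠ 0 →
        (∑ i, ((p.2 i : ℤ) - p.1 i) * (B:ℤ)^(i:ℕ)) ≤ (∑ i, ((p₀.2 i : ℤ) - p₀.1 i) * (B:ℤ)^(i:ℕ)))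
    (f : MvPolynomial (Fin k) ℂ) (hf : diffOp k S c f = 0)
    (γs : Fin k →₀ ℕ) (hγs : γs ∈ f.support)
    (hγmax : ∀ γ ∈ f.support, (∑ i, (γ i : ℤ) * (B:ℤ)^(i:ℕ)) ≤ ∑ i, (γs i : ℤ) * (B:ℤ)^(i:ℕ)) :
    ∑ p ∈ S.filter (fun p => c p ≠ 0 ∧ ∀ i, (p.2 i : ℤ) - p.1 i = (p₀.2 i : ℤ) - p₀.1 i),
      c p * descC γs p.1 = 0 := by
  by_cases hneg : ∃ i, (γs i : ℤ) + ((p₀.2 i : ℤ) - p₀.1 i) < 0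
  · obtain ⟨i, hi⟩ := hneg
    refine Finset.sum_eq_zero fun p hp => ?_
    rw [Finset.mem_filter] at hp
    have h1 : γs i < p.1 i := by have := hp.2.2 i; omega
    have hz : descC γs p.1 = 0 := Finset.prod_eq_zero (Finset.mem_univ i)
      (by rw [Nat.descFactorial_eq_zero_iff_lt.mpr h1, Nat.cast_zero])
    rw [hz, mul_zero]
  · push_neg at hneg
    set μ : Fin k →₀ ℕ := Finsupp.equivFunOnFinite.symm
        (fun i => ((γs i : ℤ) + ((p₀.2 i : ℤ) - p₀.1 i)).toNat) with hμ
    have hμi : ∀ i, (μ i : ℤ) = (γs i : ℤ) + ((p₀.2 i : ℤ) - p₀.1 i) := by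
      intro i
      have h : μ i = ((γs i : ℤ) + ((p₀.2 i : ℤ) - p₀.1 i)).toNat := rfl
      rw [h, Int.toNat_of_nonneg (hneg i)]
    have h0 : coeff μ (diffOp k S c f) = 0 := by rw [hf, coeff_zero]
    rw [coeff_diffOp] at h0
    have hstep : ∀ p ∈ S, (∑ γ ∈ f.support,
        if p.2 + (γ - p.1) = μ then c p * coeff γ f * descC γ p.1 else 0)
        = if (c p ≠ 0 ∧ ∀ i, (p.2 i : ℤ) - p.1 i = (p₀.2 i : ℤ) - p₀.1 i)
            then c p * coeff γs f * descC γs p.1 else 0 := by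
      intro p hpS
      have hvan : ∀ γ ∈ f.support, (p.2 + (γ - p.1) = μ) → descC γ p.1 ≠ 0 → c p ≠ 0 →
          ((∀ i, (p.2 i : ℤ) - p.1 i = (p₀.2 i : ℤ) - p₀.1 i) ∧ γ = γs) := by
        intro γ hγ hexp hdesc hcp
        have hle : ∀ i, p.1 i ≤ γ i := by
          intro i
          by_contra hlt
          exact hdesc (Finset.prod_eq_zero (Finset.mem_univ i)
            (by rw [Nat.descFactorial_eq_zero_iff_lt.mpr (by omega), Nat.cast_zero]))
        have hexpi : ∀ i, (γ i : ℤ) + ((p.2 i : ℤ) - p.1 i) = (μ i : ℤ) := by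
          intro i
          have h := congrArg (fun w : Fin k →₀ ℕ => w i) hexp
          simp only [Finsupp.add_apply, Finsupp.tsub_apply] at h
          have := hle i
          omega
        have hsum : (∑ i, (γ i : ℤ) * (B:ℤ)^(i:ℕ))
              + (∑ i, ((p.2 i : ℤ) - p.1 i) * (B:ℤ)^(i:ℕ))
            = (∑ i, (γs i : ℤ) * (B:ℤ)^(i:ℕ))
              + (∑ i, ((p₀.2 i : ℤ) - p₀.1 i) * (B:ℤ)^(i:ℕ)) := by
          rw [← Finset.sum_add_distrib, ← Finset.sum_add_distrib]
          refine Finset.sum_congr rfl fun i _ => ?_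
          rw [← add_mul, ← add_mul, hexpi i, hμi i]
        have hγle := hγmax γ hγ
        have hple := hmax p hpS hcp
        have hweq : (∑ i, ((p.2 i : ℤ) - p.1 i) * (B:ℤ)^(i:ℕ))
            = ∑ i, ((p₀.2 i : ℤ) - p₀.1 i) * (B:ℤ)^(i:ℕ) := by omega
        have hvp := hsep p hpS hcp hweq
        refine ⟨hvp, ?_⟩
        ext i
        have := hexpi i; have := hμi i; have := hvp i
        omega
      by_cases hcond : c p ≠ 0 ∧ ∀ i, (p.2 i : ℤ) - p.1 i = (p₀.2 i : ℤ) - p₀.1 i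
      · rw [if_pos hcond]
        have hzero : ∀ γ ∈ f.support, γ ≠ γs →
            (if p.2 + (γ - p.1) = μ then c p * coeff γ f * descC γ p.1 else 0) = 0 := by
          intro γ hγ hne
          by_cases hexp : p.2 + (γ - p.1) = μ
          · rw [if_pos hexp]
            by_cases hd : descC γ p.1 = 0
            · rw [hd, mul_zero]
            · exact absurd (hvan γ hγ hexp hd hcond.1).2 hne
          · rw [if_neg hexp]
        rw [Finset.sum_eq_single_of_mem γs hγs hzero]
        by_cases hd : descC γs p.1 = 0
        · rw [hd, mul_zero]
          split <;> rfl
        · have hle : ∀ i, p.1 i ≤ γs i := by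
            intro i
            by_contra hlt
            exact hd (Finset.prod_eq_zero (Finset.mem_univ i)
              (by rw [Nat.descFactorial_eq_zero_iff_lt.mpr (by omega), Nat.cast_zero]))
          have hexp : p.2 + (γs - p.1) = μ := by
            ext i
            simp only [Finsupp.add_apply, Finsupp.tsub_apply]
            have := hμi i; have := hcond.2 i; have := hle i
            omega
          rw [if_pos hexp]
      · rw [if_neg hcond]
        refine Finset.sum_eq_zero fun γ hγ => ?_
        by_cases hexp : p.2 + (γ - p.1) = μ
        · rw [if_pos hexp]
          by_cases hcp : c p = 0
          · rw [hcp, zero_mul, zero_mul]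
          by_cases hd : descC γ p.1 = 0
          · rw [hd, mul_zero]
          · exact absurd ⟨hcp, (hvan γ hγ hexp hd hcp).1⟩ hcond
        · rw [if_neg hexp]
    rw [Finset.sum_congr rfl hstep, ← Finset.sum_filter] at h0
    have hcf : coeff γs f ≠ 0 := MvPolynomial.mem_support_iff.mp hγs
    have hfac : coeff γs f * (∑ p ∈ S.filter (fun p => c p ≠ 0 ∧
        ∀ i, (p.2 i : ℤ) - p.1 i = (p₀.2 i : ℤ) - p₀.1 i), c p * descC γs p.1) = 0 := by
      calc coeff γs f * (∑ p ∈ S.filter (fun p => c p ≠ 0 ∧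
              ∀ i, (p.2 i : ℤ) - p.1 i = (p₀.2 i : ℤ) - p₀.1 i), c p * descC γs p.1)
          = ∑ p ∈ S.filter (fun p => c p ≠ 0 ∧
              ∀ i, (p.2 i : ℤ) - p.1 i = (p₀.2 i : ℤ) - p₀.1 i),
              c p * coeff γs f * descC γs p.1 := by
            rw [Finset.mul_sum]
            exact Finset.sum_congr rfl fun p _ => by ring
        _ = 0 := h0
    rcases mul_eq_zero.mp hfac with h | h
    · exact absurd h hcf
    · exact h

/-- if `D` is a nonzero linear differential operator with polynomial
coefficients on `ℂ[x₁,...,x_k]`, then `dim (Ker D ∩ P_m) = O(m^(k-1))` as `m → ∞`,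
where `P_m` is the space of polynomials of total degree at most `m`. -/
theorem stmt_9 (k : ℕ) (hk : 0 < k)
    (S : Finset ((Fin k →₀ ℕ) × (Fin k →₀ ℕ))) (c : ((Fin k →₀ ℕ) × (Fin k →₀ ℕ)) → ℂ)
    (hD : diffOp k S c ≠ 0) :
    (fun m : ℕ =>
        (Module.finrank ℂ
          (LinearMap.ker (diffOp k S c) ⊓ MvPolynomial.restrictTotalDegree (Fin k) ℂ m :
            Submodule ℂ (MvPolynomial (Fin k) ℂ)) : ℝ))
      =O[atTop] fun m : ℕ => (m : ℝ) ^ (k - 1) := by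
  classical
  have hex : ∃ p ∈ S, c p ≠ 0 := by
    by_contra h
    push_neg at h
    refine hD ?_
    rw [diffOp]
    exact Finset.sum_eq_zero fun p hp => by rw [h p hp, zero_smul]
  set N : ℕ := ∑ p ∈ S, ∑ i, (p.1 i + p.2 i) with hN
  set B : ℕ := 4 * N + 1 with hB
  have hbd : ∀ p ∈ S, ∀ i, p.1 i + p.2 i ≤ N := by
    intro p hp i
    calc p.1 i + p.2 i ≤ ∑ i, (p.1 i + p.2 i) :=
          Finset.single_le_sum (f := fun i => p.1 i + p.2 i)
            (fun _ _ => Nat.zero_le _) (Finset.mem_univ i)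
      _ ≤ N := Finset.single_le_sum (f := fun p => ∑ i, (p.1 i + p.2 i))
          (fun _ _ => Nat.zero_le _) hp
  have hsep : ∀ p ∈ S, ∀ q ∈ S,
      (∑ i, ((p.2 i : ℤ) - p.1 i) * (B:ℤ)^(i:ℕ)) = (∑ i, ((q.2 i : ℤ) - q.1 i) * (B:ℤ)^(i:ℕ))
      → ∀ i, (p.2 i : ℤ) - p.1 i = (q.2 i : ℤ) - q.1 i := by
    intro p hp q hq heq i
    have hz := sep_lemma B k (fun i => ((p.2 i : ℤ) - p.1 i) - ((q.2 i : ℤ) - q.1 i)) ?_ ?_ i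
    · omega
    · intro j
      have h1 := hbd p hp j
      have h2 := hbd q hq j
      have hxle : |((p.2 j : ℤ) - p.1 j) - ((q.2 j : ℤ) - q.1 j)| ≤ 2 * (N:ℤ) :=
        abs_le.mpr ⟨by push_cast; omega, by push_cast; omega⟩
      rw [hB]
      push_cast
      linarith [hxle]
    · have : ∀ i : Fin k, (((p.2 i : ℤ) - p.1 i) - ((q.2 i : ℤ) - q.1 i)) * (B:ℤ)^(i:ℕ)
          = ((p.2 i : ℤ) - p.1 i) * (B:ℤ)^(i:ℕ) - ((q.2 i : ℤ) - q.1 i) * (B:ℤ)^(i:ℕ) := by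
        intro i; ring
      rw [Finset.sum_congr rfl (fun i _ => this i), Finset.sum_sub_distrib, heq, sub_self]
  obtain ⟨p₁, hp₁S, hp₁c⟩ := hex
  obtain ⟨p₀, hp₀mem, hp₀max⟩ := Finset.exists_max_image (S.filter fun p => c p ≠ 0)
    (fun p => ∑ i, ((p.2 i : ℤ) - p.1 i) * (B:ℤ)^(i:ℕ))
    ⟨p₁, Finset.mem_filter.mpr ⟨hp₁S, hp₁c⟩⟩
  rw [Finset.mem_filter] at hp₀mem
  have hmax : ∀ p ∈ S, c p ≠ 0 →
      (∑ i, ((p.2 i : ℤ) - p.1 i) * (B:ℤ)^(i:ℕ))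
        ≤ ∑ i, ((p₀.2 i : ℤ) - p₀.1 i) * (B:ℤ)^(i:ℕ) :=
    fun p hp hc => hp₀max p (Finset.mem_filter.mpr ⟨hp, hc⟩)
  set T := S.filter (fun p => c p ≠ 0 ∧ ∀ i, (p.2 i : ℤ) - p.1 i = (p₀.2 i : ℤ) - p₀.1 i)
    with hT
  set Q : MvPolynomial (Fin k) ℂ := ∑ p ∈ T, MvPolynomial.C (c p) * Mpoly p.1 with hQdef
  have hTmem : p₀ ∈ T := Finset.mem_filter.mpr ⟨hp₀mem.1, hp₀mem.2, fun i => rfl⟩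
  have hQne : Q ≠ 0 := by
    obtain ⟨ps, hps, hpsmax⟩ := Finset.exists_max_image T (fun p => ∑ i, p.1 i) ⟨p₀, hTmem⟩
    intro h0
    have hco : coeff ps.1 Q = c ps := by
      rw [hQdef, MvPolynomial.coeff_sum]
      rw [Finset.sum_eq_single_of_mem ps hps]
      · rw [coeff_C_mul, Mpoly_coeff, mul_one]
      · intro q hq hne
        rw [coeff_C_mul]
        by_cases hcq : coeff ps.1 (Mpoly q.1) = 0
        · rw [hcq, mul_zero]
        · exfalso
          have hle : ps.1 ≤ q.1 := Mpoly_support q.1 _ (MvPolynomial.mem_support_iff.mpr hcq)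
          have heq1 : ps.1 = q.1 := le_sum_eq hle (hpsmax q hq)
          apply hne
          have hq' := Finset.mem_filter.mp hq
          have hps' := Finset.mem_filter.mp hps
          have h2eq : q.2 = ps.2 := by
            ext i
            have h1 := hq'.2.2 i
            have h2 := hps'.2.2 i
            have h3 : q.1 i = ps.1 i := by rw [← heq1]
            omega
          exact Prod.ext heq1.symm h2eq
    have hzero : c ps = 0 := by rw [← hco, h0, coeff_zero]
    exact (Finset.mem_filter.mp hps).2.1 hzero
  set d := Q.totalDegree with hd
  have hrank : ∀ m : ℕ, Module.finrank ℂ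
      (LinearMap.ker (diffOp k S c) ⊓ MvPolynomial.restrictTotalDegree (Fin k) ℂ m :
        Submodule ℂ (MvPolynomial (Fin k) ℂ)) ≤ d * (m+1)^(k-1) := by
    intro m
    set G : Finset ℂ := (Finset.range (m+1)).image (Nat.cast : ℕ → ℂ) with hG
    have hGcard : G.card = m + 1 := by
      rw [hG, Finset.card_image_of_injective _ Nat.cast_injective, Finset.card_range]
    set Mm : Fin k →₀ ℕ := Finsupp.equivFunOnFinite.symm (fun _ => m) with hMm
    set Em : Finset (Fin k →₀ ℕ) :=
      (Finset.Iic Mm).filter (fun γ => eval (fun i => (γ i : ℂ)) Q = 0) with hEm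
    have hEcard : Em.card ≤ d * (m+1)^(k-1) := by
      have hmaps : ∀ γ ∈ Em, (fun i => (γ i : ℂ))
          ∈ (Fintype.piFinset fun _ : Fin k => G).filter (fun x => eval x Q = 0) := by
        intro γ hγ
        rw [hEm, Finset.mem_filter, Finset.mem_Iic] at hγ
        rw [Finset.mem_filter, Fintype.mem_piFinset]
        refine ⟨fun i => ?_, hγ.2⟩
        rw [hG, Finset.mem_image]
        refine ⟨γ i, Finset.mem_range.mpr ?_, rfl⟩
        have h1 := hγ.1 i
        have h2 : Mm i = m := rfl
        omega
      have hinj : Set.InjOn (fun γ : Fin k →₀ ℕ => fun i => (γ i : ℂ)) Em := by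
        intro γ1 _ γ2 _ h
        ext i
        have h' : ((γ1 i : ℕ) : ℂ) = ((γ2 i : ℕ) : ℂ) := congrFun h i
        exact_mod_cast h'
      have h1 : Em.card
          ≤ ((Fintype.piFinset fun _ : Fin k => G).filter fun x => eval x Q = 0).card :=
        Finset.card_le_card_of_injOn _ hmaps hinj
      have h2 := sz k Q hQne G
      rw [hGcard] at h2
      have hk' : (m+1)^k = (m+1)^(k-1) * (m+1) := by
        rw [← pow_succ]
        congr 1
        omega
      rw [hk', ← mul_assoc] at h2
      have h3 : ((Fintype.piFinset fun _ : Fin k => G).filter fun x => eval x Q = 0).card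
          ≤ d * (m+1)^(k-1) := Nat.le_of_mul_le_mul_right h2 (by omega)
      omega
    set V := (LinearMap.ker (diffOp k S c) ⊓ MvPolynomial.restrictTotalDegree (Fin k) ℂ m :
        Submodule ℂ (MvPolynomial (Fin k) ℂ)) with hV
    let Φ : V →ₗ[ℂ] (↥Em → ℂ) :=
      { toFun := fun f => fun γ => coeff (γ : Fin k →₀ ℕ) f.1
        map_add' := fun f g => by funext γ; exact coeff_add _ _ _
        map_smul' := fun r f => by funext γ; exact coeff_smul _ _ _ }
    have hΦinj : Function.Injective Φ := by
      rw [injective_iff_map_eq_zero]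
      intro f hf0
      by_contra hne
      have hfne : (f : MvPolynomial (Fin k) ℂ) ≠ 0 := fun h => hne (Subtype.ext h)
      have hsupp : (f : MvPolynomial (Fin k) ℂ).support.Nonempty := by
        rwa [Finset.nonempty_iff_ne_empty, Ne, MvPolynomial.support_eq_empty]
      obtain ⟨γs, hγs, hγmax⟩ := Finset.exists_max_image (f : MvPolynomial (Fin k) ℂ).support
        (fun γ => ∑ i, (γ i : ℤ) * (B:ℤ)^(i:ℕ)) hsupp
      have hmem : (f : MvPolynomial (Fin k) ℂ) ∈
          (LinearMap.ker (diffOp k S c) ⊓ MvPolynomial.restrictTotalDegree (Fin k) ℂ m :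
            Submodule ℂ (MvPolynomial (Fin k) ℂ)) := f.2
      rw [Submodule.mem_inf] at hmem
      have hker : diffOp k S c (f : MvPolynomial (Fin k) ℂ) = 0 := LinearMap.mem_ker.mp hmem.1
      have hdeg : (f : MvPolynomial (Fin k) ℂ).totalDegree ≤ m :=
        (MvPolynomial.mem_restrictTotalDegree _ _ _).mp hmem.2
      have hkey := kernel_sum_eq_zero S c B p₀ hp₀mem.1 hp₀mem.2
        (fun p hp hc => hsep p hp p₀ hp₀mem.1) hmax
        (f : MvPolynomial (Fin k) ℂ) hker γs hγs hγmax
      have heval : eval (fun i => (γs i : ℂ)) Q = 0 := by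
        have hcong : ∀ p ∈ S.filter (fun p => c p ≠ 0 ∧
            ∀ i, (p.2 i : ℤ) - p.1 i = (p₀.2 i : ℤ) - p₀.1 i),
            eval (fun i => (γs i : ℂ)) (MvPolynomial.C (c p) * Mpoly p.1)
              = c p * descC γs p.1 := fun p _ => by rw [map_mul, eval_C, Mpoly_eval]
        rw [hQdef, hT, map_sum, Finset.sum_congr rfl hcong]
        exact hkey
      have hsum : (γs.sum fun _ e => e) ≤ m :=
        le_trans (MvPolynomial.le_totalDegree hγs) hdeg
      have hcoord : ∀ i, γs i ≤ m := by
        intro i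
        by_cases h0 : γs i = 0
        · omega
        · have hi : i ∈ γs.support := Finsupp.mem_support_iff.mpr h0
          have : γs i ≤ γs.sum fun _ e => e :=
            Finset.single_le_sum (f := fun j => γs j) (fun _ _ => Nat.zero_le _) hi
          omega
      have hγm : γs ∈ Em := by
        rw [hEm, Finset.mem_filter, Finset.mem_Iic]
        refine ⟨?_, heval⟩
        intro i
        show γs i ≤ Mm i
        simp only [hMm]
        exact le_trans (hcoord i) (le_of_eq rfl)
      have hc0 : coeff γs (f : MvPolynomial (Fin k) ℂ) ≠ 0 :=
        MvPolynomial.mem_support_iff.mp hγs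
      exact hc0 (congrFun hf0 ⟨γs, hγm⟩)
    calc Module.finrank ℂ V ≤ Module.finrank ℂ (↥Em → ℂ) :=
          LinearMap.finrank_le_finrank_of_injective hΦinj
      _ = Em.card := by rw [Module.finrank_fintype_fun_eq_card, Fintype.card_coe]
      _ ≤ d * (m+1)^(k-1) := hEcard
  rw [Asymptotics.isBigO_iff]
  refine ⟨(d : ℝ) * 2^(k-1), ?_⟩
  filter_upwards [Filter.eventually_ge_atTop 1] with m hm
  have hm1 : (1:ℝ) ≤ (m:ℝ) := by exact_mod_cast hm
  have h1 : ((Module.finrank ℂ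
      (LinearMap.ker (diffOp k S c) ⊓ MvPolynomial.restrictTotalDegree (Fin k) ℂ m :
        Submodule ℂ (MvPolynomial (Fin k) ℂ)) : ℕ) : ℝ) ≤ (d:ℝ) * ((m:ℝ)+1)^(k-1) := by
    have := hrank m
    calc ((Module.finrank ℂ _ : ℕ) : ℝ) ≤ ((d * (m+1)^(k-1) : ℕ) : ℝ) := by exact_mod_cast this
      _ = (d:ℝ) * ((m:ℝ)+1)^(k-1) := by push_cast; ring
  have h2 : ((m:ℝ)+1)^(k-1) ≤ (2*(m:ℝ))^(k-1) :=
    pow_le_pow_left₀ (by linarith) (by linarith) _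
  rw [Real.norm_eq_abs, Real.norm_eq_abs, abs_of_nonneg (by positivity),
    abs_of_nonneg (by positivity)]
  calc ((Module.finrank ℂ _ : ℕ) : ℝ) ≤ (d:ℝ) * ((m:ℝ)+1)^(k-1) := h1
    _ ≤ (d:ℝ) * (2*(m:ℝ))^(k-1) := by
        have hd0 : (0:ℝ) ≤ (d:ℝ) := Nat.cast_nonneg d
        exact mul_le_mul_of_nonneg_left h2 hd0
    _ = (d:ℝ) * 2^(k-1) * (m:ℝ)^(k-1) := by rw [mul_pow]; ring
end

section
/- If a set Λ ⊆ Λ_k of even partitions with at most k parts satisfies: the span of the generalized Jacobi polynomials {P_λ : λ ∈ Λ^c} intersected with polynomials of degree m has dimension at least ε·|Λ_k(2m_j)| along some sequence m_j → ∞ with ε > 0, then Λ^c-indexed polynomial solutions of any fixed nonzero polynomial-coefficient PDE in k variables contradict the bound dim(Ker D ∩ P_m) = O(m^{k-1}). Consequently, any set of linearly independent polynomials {Q_λ}_{λ∈Λ'} with deg Q_λ = |λ|/2 all lying in the kernel of a nonzero polynomial-coefficient differential operator on ℂ[σ_1,...,σ_k] forces Λ' to be sparse, i.e., |Λ' ∩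 Λ_k(2m)| / |Λ_k(2m)| → 0. -/
open Filter Asymptotics MvPolynomial


/-- Lower bound for the number of even antitone tuples with bounded sum. -/
lemma denom_lower (k : ℕ) (hk : 0 < k) (m : ℕ) :
    ((m / (k * k) + 1) ^ k : ℕ) ≤
      Nat.card {l : Fin k → ℕ // Antitone l ∧ (∀ i, Even (l i)) ∧ ∑ i, l i ≤ 2 * m} := by
  set M := m / (k * k) with hM
  have hfin : Finite {l : Fin k → ℕ // Antitone l ∧ (∀ i, Even (l i)) ∧ ∑ i, l i ≤ 2 * m} := by
    apply Finite.of_injective (fun l => (fun i => (⟨l.1 i, by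
      have h1 : l.1 i ≤ ∑ j, l.1 j :=
        Finset.single_le_sum (fun j _ => Nat.zero_le _) (Finset.mem_univ i)
      have := l.2.2.2
      omega⟩ : Fin (2 * m + 1))) : _ → (Fin k → Fin (2 * m + 1)))
    intro a b hab
    ext i
    exact congrArg Fin.val (congrFun hab i)
  have key : Function.Injective (fun (b : Fin k → Fin (M + 1)) =>
      (⟨fun i => 2 * ((k - 1 - (i : ℕ)) * M + (b i : ℕ)), by
        refine ⟨?_, fun i => ⟨(k - 1 - (i : ℕ)) * M + (b i : ℕ), by ring⟩, ?_⟩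
        · intro i j hij
          simp only
          have hbj : (b j : ℕ) ≤ M := Nat.lt_succ_iff.mp (b j).2
          have hjk : (j : ℕ) ≤ k - 1 := Nat.le_sub_one_of_lt j.2
          rcases Nat.lt_or_ge (i : ℕ) (j : ℕ) with h | h
          · have h2 : k - 1 - (j : ℕ) + 1 ≤ k - 1 - (i : ℕ) := by omega
            have h3 : (k - 1 - (j : ℕ) + 1) * M ≤ (k - 1 - (i : ℕ)) * M :=
              Nat.mul_le_mul_right _ h2
            have h4 : (k - 1 - (j : ℕ) + 1) * M = (k - 1 - (j : ℕ)) * M + M := by ring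
            omega
          · have : i = j := Fin.ext (le_antisymm hij h)
            subst this; omega
        · have hbound : ∀ i : Fin k, (k - 1 - (i : ℕ)) * M + (b i : ℕ) ≤ k * M := by
            intro i
            have hb : (b i : ℕ) ≤ M := Nat.lt_succ_iff.mp (b i).2
            have h1 : (k - 1 - (i : ℕ)) * M ≤ (k - 1) * M :=
              Nat.mul_le_mul_right _ (Nat.sub_le _ _)
            have h2 : (k - 1) * M + M = k * M := by
              have hkk : k - 1 + 1 = k := Nat.succ_pred_eq_of_pos hk
              calc (k - 1) * M + M = (k - 1 + 1) * M := by ring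
                _ = k * M := by rw [hkk]
            omega
          calc ∑ i : Fin k, 2 * ((k - 1 - (i : ℕ)) * M + (b i : ℕ))
              ≤ ∑ _i : Fin k, 2 * (k * M) :=
                Finset.sum_le_sum fun i _ => Nat.mul_le_mul_left 2 (hbound i)
            _ = k * (2 * (k * M)) := by
                rw [Finset.sum_const, Finset.card_univ, Fintype.card_fin, smul_eq_mul]
            _ = 2 * (k * k * M) := by ring
            _ ≤ 2 * m := by
                have h5 : k * k * M ≤ m := by
                  rw [hM, Nat.mul_comm]; exact Nat.div_mul_le_self m (k * k)
                omega⟩ :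
        {l : Fin k → ℕ // Antitone l ∧ (∀ i, Even (l i)) ∧ ∑ i, l i ≤ 2 * m})) := by
    intro a b hab
    have h := congrArg Subtype.val hab
    funext i
    have h2 := congrFun h i
    simp only at h2
    exact Fin.ext (by omega)
  have := Nat.card_le_card_of_injective _ key
  simpa [Nat.card_eq_fintype_card, Fintype.card_fun] using this

lemma numer_upper (k : ℕ) (D : Module.End ℂ (MvPolynomial (Fin k) ℂ))
    (Λ' : Set {l : Fin k → ℕ // Antitone l ∧ ∀ i, Even (l i)})
    (Q : Λ' → MvPolynomial (Fin k) ℂ)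
    (hQind : LinearIndependent ℂ Q)
    (hQdeg : ∀ l : Λ', 2 * (Q l).totalDegree = ∑ i, l.1.1 i)
    (hQker : ∀ l : Λ', Q l ∈ LinearMap.ker D) (m : ℕ) :
    Nat.card {l : {l : Fin k → ℕ // Antitone l ∧ ∀ i, Even (l i)} //
        l ∈ Λ' ∧ ∑ i, l.1 i ≤ 2 * m} ≤
      Module.finrank ℂ
        (LinearMap.ker D ⊓ MvPolynomial.restrictTotalDegree (Fin k) ℂ m :
          Submodule ℂ (MvPolynomial (Fin k) ℂ)) := by
  classical
  set W : Submodule ℂ (MvPolynomial (Fin k) ℂ) :=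
    LinearMap.ker D ⊓ MvPolynomial.restrictTotalDegree (Fin k) ℂ m with hW
  haveI : FiniteDimensional ℂ (MvPolynomial.restrictTotalDegree (Fin k) ℂ m) := by
    infer_instance
  haveI : FiniteDimensional ℂ W :=
    Submodule.finiteDimensional_of_le (inf_le_right : W ≤ _)
  set S := {l : {l : Fin k → ℕ // Antitone l ∧ ∀ i, Even (l i)} //
      l ∈ Λ' ∧ ∑ i, l.1 i ≤ 2 * m} with hS
  let e : S → Λ' := fun l => ⟨l.1, l.2.1⟩
  have he : Function.Injective e := by
    intro a b hab
    have h1 : (e a).1 = (e b).1 := congrArg Subtype.val hab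
    exact Subtype.ext h1
  have hmem : ∀ l : S, Q (e l) ∈ W := by
    intro l
    refine ⟨hQker (e l), ?_⟩
    show Q (e l) ∈ MvPolynomial.restrictTotalDegree (Fin k) ℂ m
    rw [MvPolynomial.mem_restrictTotalDegree]
    have hdeg := hQdeg (e l)
    have h2 := l.2.2
    have h3 : (∑ i, ((e l).1 : Fin k → ℕ) i) = ∑ i, (l.1 : Fin k → ℕ) i := rfl
    rw [h3] at hdeg
    omega
  let v : S → W := fun l => ⟨Q (e l), hmem l⟩
  have hv : LinearIndependent ℂ v := by
    apply LinearIndependent.of_comp W.subtype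
    have : (W.subtype ∘ v) = Q ∘ e := rfl
    rw [this]
    exact hQind.comp e he
  haveI : Finite S := hv.finite
  haveI : Fintype S := Fintype.ofFinite S
  rw [Nat.card_eq_fintype_card]
  exact hv.fintype_card_le_finrank

/-- let `D` be a nonzero linear differential operator with polynomial
coefficients on `ℂ[σ₁,...,σ_k]`, known to satisfy `dim(Ker D ∩ P_m) = O(m^(k-1))`.
If `{Q_λ}_{λ ∈ Λ'}` is a family of linearly independent polynomials indexed by a set `Λ'`
of even partitions with at most `k` parts, with `deg Q_λ = |λ|/2`, all lying in `Ker D`,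
then `Λ'` is sparse: `|Λ' ∩ Λ_k(2m)| / |Λ_k(2m)| → 0` as `m → ∞`. -/
theorem stmt_14 (k : ℕ) (hk : 0 < k)
    (D : Module.End ℂ (MvPolynomial (Fin k) ℂ)) (hD : D ≠ 0)
    (hker : (fun m : ℕ =>
        (Module.finrank ℂ
          (LinearMap.ker D ⊓ MvPolynomial.restrictTotalDegree (Fin k) ℂ m :
            Submodule ℂ (MvPolynomial (Fin k) ℂ)) : ℝ))
      =O[atTop] fun m : ℕ => (m : ℝ) ^ (k - 1))
    (Λ' : Set {l : Fin k → ℕ // Antitone l ∧ ∀ i, Even (l i)})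
    (Q : Λ' → MvPolynomial (Fin k) ℂ)
    (hQind : LinearIndependent ℂ Q)
    (hQdeg : ∀ l : Λ', 2 * (Q l).totalDegree = ∑ i, l.1.1 i)
    (hQker : ∀ l : Λ', Q l ∈ LinearMap.ker D) :
    Tendsto (fun m : ℕ =>
        (Nat.card {l : {l : Fin k → ℕ // Antitone l ∧ ∀ i, Even (l i)} //
            l ∈ Λ' ∧ ∑ i, l.1 i ≤ 2 * m} : ℝ) /
        (Nat.card {l : Fin k → ℕ // Antitone l ∧ (∀ i, Even (l i)) ∧ ∑ i, l i ≤ 2 * m} : ℝ))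
      atTop (nhds 0) := by
  rw [isBigO_iff] at hker
  obtain ⟨c, hc⟩ := hker
  have hKpos : (0 : ℝ) < ((k * k : ℕ) : ℝ) := by
    have : 0 < k * k := Nat.mul_pos hk hk
    exact_mod_cast this
  refine squeeze_zero' (g := fun m : ℕ => (c * ((k * k : ℕ) : ℝ) ^ k) / m)
    (Eventually.of_forall fun m => div_nonneg (Nat.cast_nonneg _) (Nat.cast_nonneg _)) ?_
    (tendsto_const_div_atTop_nhds_zero_nat _)
  filter_upwards [hc, eventually_ge_atTop 1] with m hm hm1
  set N : ℕ := Nat.card {l : {l : Fin k → ℕ // Antitone l ∧ ∀ i, Even (l i)} //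
      l ∈ Λ' ∧ ∑ i, l.1 i ≤ 2 * m} with hN
  set Dm : ℕ := Nat.card {l : Fin k → ℕ // Antitone l ∧ (∀ i, Even (l i)) ∧ ∑ i, l i ≤ 2 * m}
    with hDm
  -- numerator bound
  have hnum : (N : ℝ) ≤ c * (m : ℝ) ^ (k - 1) := by
    have h1 : (N : ℝ) ≤
        (Module.finrank ℂ
          (LinearMap.ker D ⊓ MvPolynomial.restrictTotalDegree (Fin k) ℂ m :
            Submodule ℂ (MvPolynomial (Fin k) ℂ)) : ℝ) := by
      exact_mod_cast numer_upper k D Λ' Q hQind hQdeg hQker m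
    have h2 : (Module.finrank ℂ
          (LinearMap.ker D ⊓ MvPolynomial.restrictTotalDegree (Fin k) ℂ m :
            Submodule ℂ (MvPolynomial (Fin k) ℂ)) : ℝ) ≤ c * (m : ℝ) ^ (k - 1) := by
      have h3 := hm
      rw [Real.norm_eq_abs, Real.norm_eq_abs, abs_of_nonneg (by positivity),
        abs_of_nonneg (by positivity)] at h3
      exact h3
    exact h1.trans h2
  -- denominator bound
  have hdenom : ((m : ℝ) / ((k * k : ℕ) : ℝ)) ^ k ≤ (Dm : ℝ) := by
    have h1 : ((m / (k * k) + 1 : ℕ) : ℝ) ^ k ≤ (Dm : ℝ) := by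
      exact_mod_cast denom_lower k hk m
    have h2 : (m : ℝ) / ((k * k : ℕ) : ℝ) ≤ ((m / (k * k) + 1 : ℕ) : ℝ) := by
      rw [div_le_iff₀ hKpos]
      have h3 : m < (m / (k * k) + 1) * (k * k) := by
        have h4 := Nat.div_add_mod m (k * k)
        have h5 : m % (k * k) < k * k := Nat.mod_lt _ (Nat.mul_pos hk hk)
        nlinarith [Nat.div_add_mod m (k * k)]
      exact_mod_cast h3.le
    exact (pow_le_pow_left₀ (div_nonneg (Nat.cast_nonneg _) hKpos.le) h2 k).trans h1
  have hmpos : (0 : ℝ) < m := by exact_mod_cast hm1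
  have hBpos : (0 : ℝ) < ((m : ℝ) / ((k * k : ℕ) : ℝ)) ^ k :=
    pow_pos (div_pos hmpos hKpos) k
  calc (N : ℝ) / (Dm : ℝ)
      ≤ (c * (m : ℝ) ^ (k - 1)) / (((m : ℝ) / ((k * k : ℕ) : ℝ)) ^ k) :=
        div_le_div₀ ((Nat.cast_nonneg N).trans hnum) hnum hBpos hdenom
    _ = (c * ((k * k : ℕ) : ℝ) ^ k) / m := by
        have hmk : (m : ℝ) ^ k = (m : ℝ) ^ (k - 1) * m := by
          rw [← pow_succ, Nat.sub_add_cancel hk]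
        rw [div_pow, hmk]
        field_simp
end

section
/- If the minimum of p and n−p is strictly less than the minimum of k and n−k, then the ratio |Λ_{min(p,n−p)}(2m)| / |Λ_{min(k,n−k)}(2m)| tends to 0 as m → ∞, where Λ_j(2m) counts partitions into at most j even parts summing to at most 2m. -/
open Filter

lemma stmt15_aux_inj (j m : ℕ) :
    ∃ f : {l : Fin j → ℕ // Antitone l ∧ (∀ i, Even (l i)) ∧ ∑ i, l i ≤ 2 * m} →
        (Fin j → Fin (2 * m + 1)), Function.Injective f := by
  refine ⟨fun l i => ⟨l.1 i, ?_⟩, ?_⟩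
  · have h1 : l.1 i ≤ ∑ i, l.1 i :=
      Finset.single_le_sum (fun i _ => Nat.zero_le _) (Finset.mem_univ i)
    have h2 := l.2.2.2
    omega
  · intro l l' h
    apply Subtype.ext; funext i
    have := congrFun h i
    simpa [Fin.ext_iff] using this

lemma stmt15_finite (j m : ℕ) :
    Finite {l : Fin j → ℕ // Antitone l ∧ (∀ i, Even (l i)) ∧ ∑ i, l i ≤ 2 * m} := by
  obtain ⟨f, hf⟩ := stmt15_aux_inj j m
  exact Finite.of_injective f hf

lemma stmt15_upper (j m : ℕ) :
    Nat.card {l : Fin j → ℕ // Antitone l ∧ (∀ i, Even (l i)) ∧ ∑ i, l i ≤ 2 * m}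
      ≤ (2 * m + 1) ^ j := by
  obtain ⟨f, hf⟩ := stmt15_aux_inj j m
  calc Nat.card {l : Fin j → ℕ // Antitone l ∧ (∀ i, Even (l i)) ∧ ∑ i, l i ≤ 2 * m}
      ≤ Nat.card (Fin j → Fin (2 * m + 1)) := Nat.card_le_card_of_injective f hf
    _ = (2 * m + 1) ^ j := by simp [Nat.card_eq_fintype_card]

lemma stmt15_lower (j m : ℕ) (hj : 1 ≤ j) :
    (m / (2 * j ^ 2) + 1) ^ j ≤
      Nat.card {l : Fin j → ℕ // Antitone l ∧ (∀ i, Even (l i)) ∧ ∑ i, l i ≤ 2 * m} := by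
  haveI := stmt15_finite j m
  set t := m / (2 * j ^ 2) with ht
  have key : t * (2 * j ^ 2) ≤ m := Nat.div_mul_le_self m (2 * j ^ 2)
  obtain ⟨jj, rfl⟩ : ∃ jj, j = jj + 1 := ⟨j - 1, by omega⟩
  set j := jj + 1
  have hg : ∃ g : (Fin j → Fin (t + 1)) →
      {l : Fin j → ℕ // Antitone l ∧ (∀ i, Even (l i)) ∧ ∑ i, l i ≤ 2 * m},
      Function.Injective g := by
    refine ⟨fun d => ⟨fun i => 2 * ((d i : ℕ) + (j - 1 - i.val) * t), ?_, ?_, ?_⟩, ?_⟩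
    · intro i i' hii'
      rcases eq_or_lt_of_le hii' with rfl | hlt
      · exact le_refl _
      · have hd : (d i' : ℕ) ≤ t := Fin.is_le _
        have hsub : (j - 1 - i'.val) + 1 ≤ j - 1 - i.val := by
          have h1 := i'.isLt
          have h2 : i.val < i'.val := hlt
          omega
        have : (d i' : ℕ) + (j - 1 - i'.val) * t ≤ (d i : ℕ) + (j - 1 - i.val) * t := by
          calc (d i' : ℕ) + (j - 1 - i'.val) * t ≤ t + (j - 1 - i'.val) * t := by omega
            _ = ((j - 1 - i'.val) + 1) * t := by ring
            _ ≤ (j - 1 - i.val) * t := Nat.mul_le_mul_right t hsub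
            _ ≤ (d i : ℕ) + (j - 1 - i.val) * t := Nat.le_add_left _ _
        exact Nat.mul_le_mul_left 2 this
    · intro i; exact ⟨(d i : ℕ) + (j - 1 - i.val) * t, by ring⟩
    · have hterm : ∀ i : Fin j, 2 * ((d i : ℕ) + (j - 1 - i.val) * t)
          ≤ 2 * (t + (j - 1) * t) := by
        intro i
        have h1 : (d i : ℕ) ≤ t := Fin.is_le _
        have h2 : (j - 1 - i.val) * t ≤ (j - 1) * t := Nat.mul_le_mul_right t (by omega)
        omega
      calc ∑ i, 2 * ((d i : ℕ) + (j - 1 - i.val) * t)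
          ≤ ∑ _i : Fin j, 2 * (t + (j - 1) * t) := Finset.sum_le_sum fun i _ => hterm i
        _ = j * (2 * (t + (j - 1) * t)) := by simp [mul_comm]
        _ ≤ 2 * m := by
            have hjj : j - 1 = jj := by omega
            rw [hjj]
            have e : j * (2 * (t + jj * t)) = t * (2 * j ^ 2) := by
              show (jj + 1) * (2 * (t + jj * t)) = t * (2 * (jj + 1) ^ 2); ring
            rw [e]; linarith [key]
    · intro d d' hgg
      funext i
      apply Fin.ext
      have := congrFun (congrArg Subtype.val hgg) i
      dsimp at this
      omega
  obtain ⟨g, hginj⟩ := hg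
  calc (t + 1) ^ j = Nat.card (Fin j → Fin (t + 1)) := by simp [Nat.card_eq_fintype_card]
    _ ≤ _ := Nat.card_le_card_of_injective g hginj

/-- if `min(p, n−p) < min(k, n−k)` (with `1 ≤ p, k ≤ n−1`), then the ratio
`|Λ_{min(p,n−p)}(2m)| / |Λ_{min(k,n−k)}(2m)|` of counts of partitions into at most that
many even parts summing to at most `2m` tends to `0` as `m → ∞`. -/
theorem stmt_15 (n p k : ℕ) (hp : 1 ≤ p) (hp' : p ≤ n - 1) (hk : 1 ≤ k) (hk' : k ≤ n - 1)
    (h : min p (n - p) < min k (n - k)) :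
    Tendsto (fun m : ℕ =>
        (Nat.card {l : Fin (min p (n - p)) → ℕ //
            Antitone l ∧ (∀ i, Even (l i)) ∧ ∑ i, l i ≤ 2 * m} : ℝ) /
        (Nat.card {l : Fin (min k (n - k)) → ℕ //
            Antitone l ∧ (∀ i, Even (l i)) ∧ ∑ i, l i ≤ 2 * m} : ℝ))
      atTop (nhds 0) := by
  set a := min p (n - p) with ha_def
  set b := min k (n - k) with hb_def
  have hn : 2 ≤ n := by omega
  have ha1 : 1 ≤ a := le_min hp (by omega)
  have hab : a < b := h
  have hbpos0 : (0 : ℝ) < (b : ℝ) := by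
    have : 0 < b := by omega
    exact_mod_cast this
  have hb0 : (0 : ℝ) < 2 * (b : ℝ) ^ 2 := by positivity
  set C : ℝ := 3 ^ a * (2 * (b : ℝ) ^ 2) ^ b with hC_def
  apply squeeze_zero' (g := fun m : ℕ => C * ((m : ℝ) ^ a / (m : ℝ) ^ b))
  · exact Eventually.of_forall fun m => div_nonneg (Nat.cast_nonneg _) (Nat.cast_nonneg _)
  · filter_upwards [eventually_ge_atTop 1] with m hm
    have hm0 : (0 : ℝ) < (m : ℝ) := by exact_mod_cast hm
    -- upper bound for numerator
    have hupper : (Nat.card {l : Fin a → ℕ //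
        Antitone l ∧ (∀ i, Even (l i)) ∧ ∑ i, l i ≤ 2 * m} : ℝ) ≤ (3 * (m : ℝ)) ^ a := by
      have h1 : (Nat.card {l : Fin a → ℕ //
          Antitone l ∧ (∀ i, Even (l i)) ∧ ∑ i, l i ≤ 2 * m} : ℝ)
          ≤ ((2 * m + 1 : ℕ) : ℝ) ^ a := by
        exact_mod_cast Nat.cast_le.mpr (stmt15_upper a m)
      refine h1.trans (pow_le_pow_left₀ (by positivity) ?_ a)
      have hm1 : (1 : ℝ) ≤ (m : ℝ) := by exact_mod_cast hm
      push_cast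
      linarith
    -- lower bound for denominator
    have hlower : ((m : ℝ) / (2 * (b : ℝ) ^ 2)) ^ b ≤
        (Nat.card {l : Fin b → ℕ //
          Antitone l ∧ (∀ i, Even (l i)) ∧ ∑ i, l i ≤ 2 * m} : ℝ) := by
      set t := m / (2 * b ^ 2) with ht
      have h1 : ((t + 1 : ℕ) : ℝ) ^ b ≤ (Nat.card {l : Fin b → ℕ //
          Antitone l ∧ (∀ i, Even (l i)) ∧ ∑ i, l i ≤ 2 * m} : ℝ) := by
        exact_mod_cast Nat.cast_le.mpr (stmt15_lower b m (by omega))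
      refine le_trans (pow_le_pow_left₀ (by positivity) ?_ b) h1
      rw [div_le_iff₀ hb0]
      have hbpos : 0 < b := by omega
      have hbb : 0 < 2 * b ^ 2 := Nat.mul_pos two_pos (pow_pos hbpos 2)
      have h2 : m < (t + 1) * (2 * b ^ 2) := by
        have hmod : m % (2 * b ^ 2) < 2 * b ^ 2 := Nat.mod_lt _ hbb
        have hdm : 2 * b ^ 2 * t + m % (2 * b ^ 2) = m := by
          rw [ht]; exact Nat.div_add_mod _ _
        nlinarith
      calc (m : ℝ) ≤ ((t + 1) * (2 * b ^ 2) : ℕ) := by exact_mod_cast h2.le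
        _ = ((t + 1 : ℕ) : ℝ) * (2 * (b : ℝ) ^ 2) := by push_cast; ring
    have hlowpos : (0 : ℝ) < ((m : ℝ) / (2 * (b : ℝ) ^ 2)) ^ b :=
      pow_pos (div_pos hm0 hb0) b
    calc (Nat.card {l : Fin a → ℕ //
          Antitone l ∧ (∀ i, Even (l i)) ∧ ∑ i, l i ≤ 2 * m} : ℝ) /
        (Nat.card {l : Fin b → ℕ //
          Antitone l ∧ (∀ i, Even (l i)) ∧ ∑ i, l i ≤ 2 * m} : ℝ)
        ≤ (3 * (m : ℝ)) ^ a / ((m : ℝ) / (2 * (b : ℝ) ^ 2)) ^ b :=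
          div_le_div₀ (by positivity) hupper hlowpos hlower
      _ = C * ((m : ℝ) ^ a / (m : ℝ) ^ b) := by
          rw [mul_pow, div_pow, hC_def]
          field_simp
  · have h1 : Tendsto (fun m : ℕ => (m : ℝ) ^ a / (m : ℝ) ^ b) atTop (nhds 0) :=
      (tendsto_pow_div_pow_atTop_zero hab).comp tendsto_natCast_atTop_atTop
    simpa using h1.const_mul C
end
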